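/- arXiv:1610.04085 — 7 statements merged into one kernel-verified Lean document; each statement's English description precedes it below -/
import Mathlib

section
/- The following are equivalent: (i) for every decreasing sequence (A_n) ⊆ 𝔉 with ⋂_{n} A_n = ∅ one has sup_{P∈𝒫} P(A_n) → 0 as n → ∞; (ii) every linear functional l : ℒ^∞ → ℝ for which there exists a constant C with |l(f)| ≤ C · sup_{P∈𝒫} E_P[|f|] for all f ∈ ℒ^∞ admits a finite signed measure μ on (Ω, 𝔉) such that l(f) = ∫ f dμ for all f ∈ ℒ^∞. -/
open MeasureTheory Filter Topology Set

/-- The submodule of bounded measurable real-valued functions (ℒ^∞). -/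
def boundedMeasurable (Ω : Type*) [MeasurableSpace Ω] : Submodule ℝ (Ω → ℝ) where
  carrier := {f | Measurable f ∧ ∃ K : ℝ, ∀ ω, |f ω| ≤ K}
  add_mem' := by
    rintro f g ⟨hf, K₁, hK₁⟩ ⟨hg, K₂, hK₂⟩
    exact ⟨hf.add hg, K₁ + K₂, fun ω =>
      (abs_add_le _ _).trans (add_le_add (hK₁ ω) (hK₂ ω))⟩
  zero_mem' := ⟨measurable_const, 0, fun ω => by simp⟩
  smul_mem' := by
    rintro c f ⟨hf, K, hK⟩
    refine ⟨(hf.const_mul c : Measurable fun ω => c * f ω), |c| * K, fun ω => ?_⟩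
    simp only [Pi.smul_apply, smul_eq_mul, abs_mul]
    exact mul_le_mul_of_nonneg_left (hK ω) (abs_nonneg c)

/-- Integral of a function against a finite signed measure, via the Jordan decomposition. -/
noncomputable def sInt {Ω : Type*} [MeasurableSpace Ω] (μ : SignedMeasure Ω) (f : Ω → ℝ) : ℝ :=
  (∫ ω, f ω ∂μ.toJordanDecomposition.posPart) - ∫ ω, f ω ∂μ.toJordanDecomposition.negPart

/-- A signed measure is dominated by the capacity `c = sup_{P ∈ Pr} P`. -/
def sDomC {Ω : Type*} [MeasurableSpace Ω] (Pr : Set (Measure Ω)) (μ : SignedMeasure Ω) : Prop :=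
  ∀ A : Set Ω, MeasurableSet A → (∀ P ∈ Pr, P A = 0) → μ A = 0

/-- A (nonnegative) measure is dominated by the capacity `c = sup_{P ∈ Pr} P`. -/
def mDomC {Ω : Type*} [MeasurableSpace Ω] (Pr : Set (Measure Ω)) (μ : Measure Ω) : Prop :=
  ∀ A : Set Ω, MeasurableSet A → (∀ P ∈ Pr, P A = 0) → μ A = 0

/-- `ca_c`: the space of finite signed measures dominated by `c`, as a submodule. -/
def caC (Ω : Type*) [MeasurableSpace Ω] (Pr : Set (Measure Ω)) :
    Submodule ℝ (SignedMeasure Ω) where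
  carrier := {μ | sDomC Pr μ}
  add_mem' := by
    intro μ ν hμ hν A hA h0
    rw [MeasureTheory.VectorMeasure.add_apply, hμ A hA h0, hν A hA h0, add_zero]
  zero_mem' := by intro A hA h0; rfl
  smul_mem' := by
    intro c μ hμ A hA h0
    rw [MeasureTheory.VectorMeasure.smul_apply, hμ A hA h0, smul_zero]

/-- The weak topology `τ = σ(ℒ^∞, ca_c)` on `ℒ^∞`. -/
noncomputable def tauTop (Ω : Type*) [MeasurableSpace Ω] (Pr : Set (Measure Ω)) :
    TopologicalSpace (boundedMeasurable Ω) :=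
  ⨅ μ : caC Ω Pr, TopologicalSpace.induced (fun f => sInt μ.1 f.1) inferInstance

/-- A property holds `Pr`-quasi surely if it holds `P`-a.s. for every `P ∈ Pr`. -/
def QS {Ω : Type*} [MeasurableSpace Ω] (Pr : Set (Measure Ω)) (p : Ω → Prop) : Prop :=
  ∀ P ∈ Pr, ∀ᵐ ω ∂P, p ω

/-- `Pr`-sensitivity of a subset of `ℒ^∞`. -/
def PSensitive {Ω : Type*} [MeasurableSpace Ω] (Pr : Set (Measure Ω))
    (𝒜 : Set (boundedMeasurable Ω)) : Prop :=
  ∃ 𝒬 : Set (Measure Ω), (∀ Q ∈ 𝒬, IsProbabilityMeasure Q ∧ mDomC Pr Q) ∧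
    ∀ X : boundedMeasurable Ω,
      (∀ Q ∈ 𝒬, ∃ Y ∈ 𝒜, X.1 =ᵐ[Q] Y.1) → X ∈ 𝒜

/-- Fatou closedness of a subset of `ℒ^∞`. -/
def FatouClosed {Ω : Type*} [MeasurableSpace Ω] (Pr : Set (Measure Ω))
    (𝒜 : Set (boundedMeasurable Ω)) : Prop :=
  ∀ (X : ℕ → boundedMeasurable Ω) (X₀ : boundedMeasurable Ω),
    (∀ n, X n ∈ 𝒜) →
    (∃ K : ℝ, 0 ≤ K ∧ ∀ n, QS Pr fun ω => |(X n).1 ω| ≤ K) →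
    (QS Pr fun ω => Tendsto (fun n => (X n).1 ω) atTop (𝓝 (X₀.1 ω))) →
    X₀ ∈ 𝒜

/-- Hypothesis (D): every norm-continuous linear functional on `ca_c` is represented by
integration against some element of `ℒ^∞`. -/
def HypD (Ω : Type*) [MeasurableSpace Ω] (Pr : Set (Measure Ω)) : Prop :=
  ∀ l : caC Ω Pr →ₗ[ℝ] ℝ,
    (∃ C : ℝ, ∀ μ : caC Ω Pr, |l μ| ≤ C * (μ.1.totalVariation Set.univ).toReal) →
    ∃ X : boundedMeasurable Ω, ∀ μ : caC Ω Pr, l μ = sInt μ.1 X.1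

section Aux
variable {Ω : Type*} [MeasurableSpace Ω]

/-- The indicator of a measurable set as an element of `boundedMeasurable`. -/
noncomputable def indE (A : Set Ω) (hA : MeasurableSet A) : boundedMeasurable Ω :=
  ⟨A.indicator (fun _ => (1:ℝ)), measurable_const.indicator hA, 1, fun ω => by
    by_cases h : ω ∈ A <;> simp [Set.indicator_apply, h]⟩

lemma indE_apply (A : Set Ω) (hA : MeasurableSet A) :
    (indE A hA).1 = A.indicator (fun _ => (1:ℝ)) := rfl

lemma bm_integrable (f : boundedMeasurable Ω) (μ : Measure Ω) [MeasureTheory.IsFiniteMeasure μ] :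
    MeasureTheory.Integrable f.1 μ := by
  obtain ⟨hm, K, hK⟩ := f.2
  exact (MeasureTheory.integrable_const K).mono' hm.aestronglyMeasurable
    (Filter.Eventually.of_forall fun ω => by simpa using hK ω)

lemma bm_abs_integral_le (f : boundedMeasurable Ω) {K : ℝ} (hK : ∀ ω, |f.1 ω| ≤ K)
    (μ : Measure Ω) [MeasureTheory.IsProbabilityMeasure μ] :
    ∫ ω, |f.1 ω| ∂μ ≤ K := by
  calc ∫ ω, |f.1 ω| ∂μ ≤ ∫ _, K ∂μ := by
        refine MeasureTheory.integral_mono ((bm_integrable f μ).abs) (MeasureTheory.integrable_const K) hK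
      _ = K := by simp
lemma sInt_sub_eq (p q : Measure Ω) [MeasureTheory.IsFiniteMeasure p]
    [MeasureTheory.IsFiniteMeasure q] (f : boundedMeasurable Ω) :
    sInt (p.toSignedMeasure - q.toSignedMeasure) f.1
      = (∫ ω, f.1 ω ∂p) - ∫ ω, f.1 ω ∂q := by
  set μ := p.toSignedMeasure - q.toSignedMeasure with hμdef
  set jp := μ.toJordanDecomposition.posPart with hjp
  set jn := μ.toJordanDecomposition.negPart with hjn
  have hjd : jp.toSignedMeasure - jn.toSignedMeasure = μ :=
    MeasureTheory.SignedMeasure.toSignedMeasure_toJordanDecomposition μ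
  have hmeas : jp + q = p + jn := by
    ext A hA
    have h1 : (jp A).toReal - (jn A).toReal = (p A).toReal - (q A).toReal := by
      have h0 := congrArg (fun v : MeasureTheory.SignedMeasure Ω => v A) hjd
      simpa only [hμdef, MeasureTheory.Measure.toSignedMeasure_sub_apply hA, MeasureTheory.measureReal_def] using h0
    have h2 : (jp A).toReal + (q A).toReal = (p A).toReal + (jn A).toReal := by linarith
    rw [← ENNReal.toReal_add (MeasureTheory.measure_ne_top _ _) (MeasureTheory.measure_ne_top _ _),
      ← ENNReal.toReal_add (MeasureTheory.measure_ne_top _ _)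
        (MeasureTheory.measure_ne_top _ _)] at h2
    have h3 := (ENNReal.toReal_eq_toReal_iff'
      (by exact ENNReal.add_ne_top.2 ⟨MeasureTheory.measure_ne_top _ _, MeasureTheory.measure_ne_top _ _⟩)
      (by exact ENNReal.add_ne_top.2 ⟨MeasureTheory.measure_ne_top _ _, MeasureTheory.measure_ne_top _ _⟩)).1 h2
    simpa [MeasureTheory.Measure.add_apply] using h3
  have h4 : (∫ ω, f.1 ω ∂(jp + q)) = ∫ ω, f.1 ω ∂(p + jn) := by rw [hmeas]
  rw [MeasureTheory.integral_add_measure (bm_integrable f jp) (bm_integrable f q),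
    MeasureTheory.integral_add_measure (bm_integrable f p) (bm_integrable f jn)] at h4
  have h5 : sInt μ f.1 = (∫ ω, f.1 ω ∂jp) - ∫ ω, f.1 ω ∂jn := rfl
  rw [h5]; linarith
lemma reverse_dir (Pr : Set (Measure Ω))
    (hprob : ∀ P ∈ Pr, MeasureTheory.IsProbabilityMeasure P)
    (hdual : ∀ l : boundedMeasurable Ω →ₗ[ℝ] ℝ,
      (∃ C : ℝ, ∀ f : boundedMeasurable Ω,
        |l f| ≤ C * ⨆ P : Pr, ∫ ω, |f.1 ω| ∂(P.1)) →
      ∃ μ : MeasureTheory.SignedMeasure Ω, ∀ f : boundedMeasurable Ω, l f = sInt μ f.1)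
    (A : ℕ → Set Ω) (hAm : ∀ n, MeasurableSet (A n)) (hAa : Antitone A)
    (hAe : (⋂ n, A n) = ∅) :
    Filter.Tendsto (fun n => ⨆ P ∈ Pr, P (A n)) Filter.atTop (nhds 0) := by
  by_contra hnot
  have hs_anti : Antitone (fun n => ⨆ P ∈ Pr, P (A n)) := fun m n h =>
    iSup_mono fun P => iSup_mono fun _ => MeasureTheory.measure_mono (hAa h)
  have hs_tend := tendsto_atTop_iInf hs_anti
  set δ := ⨅ n, ⨆ P ∈ Pr, P (A n) with hδdef
  have hδ0 : δ ≠ 0 := by intro h; rw [h] at hs_tend; exact hnot hs_tend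
  have hδtop : δ ≠ ⊤ := by
    have h1 : (⨆ P ∈ Pr, P (A 0)) ≤ 1 := by
      refine iSup₂_le fun Q hQ => ?_
      haveI := hprob Q hQ
      exact MeasureTheory.prob_le_one
    exact ne_top_of_le_ne_top ENNReal.one_ne_top ((iInf_le _ 0).trans h1)
  have hhalf : ∀ n, ∃ P ∈ Pr, δ / 2 < P (A n) := by
    intro n
    have h1 : δ / 2 < ⨆ P ∈ Pr, P (A n) :=
      lt_of_lt_of_le (ENNReal.half_lt_self hδ0 hδtop) (iInf_le _ n)
    obtain ⟨P, hP⟩ := lt_iSup_iff.1 h1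
    obtain ⟨hPmem, hlt⟩ := lt_iSup_iff.1 hP
    exact ⟨P, hPmem, hlt⟩
  choose P hPmem hPlt using hhalf
  haveI hPP : ∀ n, MeasureTheory.IsProbabilityMeasure (P n) := fun n => hprob _ (hPmem n)
  set ε := (δ / 2).toReal with hεdef
  have hε0 : 0 < ε := ENNReal.toReal_pos
    (by simp [ENNReal.div_eq_zero_iff, hδ0])
    (ne_top_of_le_ne_top hδtop ENNReal.half_le_self)
  have hPAm : ∀ m n, m ≤ n → ε ≤ ((P n) (A m)).toReal := by
    intro m n hmn
    have h1 : δ / 2 ≤ (P n) (A m) :=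
      le_trans (hPlt n).le (MeasureTheory.measure_mono (hAa hmn))
    exact ENNReal.toReal_mono (MeasureTheory.measure_ne_top _ _) h1
  set U := Filter.hyperfilter ℕ with hUdef
  -- boundedness of the sequence of integrals
  have hint : ∀ (f : boundedMeasurable Ω) (n : ℕ),
      |∫ ω, f.1 ω ∂(P n)| ≤ ⨆ Q : Pr, ∫ ω, |f.1 ω| ∂(Q.1) := by
    intro f n
    obtain ⟨hm, K, hK⟩ := f.2
    have h1 : |∫ ω, f.1 ω ∂(P n)| ≤ ∫ ω, |f.1 ω| ∂(P n) := by
      simpa using MeasureTheory.norm_integral_le_integral_norm (μ := P n) f.1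
    refine h1.trans (le_ciSup (f := fun Q : Pr => ∫ ω, |f.1 ω| ∂(Q.1)) ?_ ⟨P n, hPmem n⟩)
    refine ⟨K, ?_⟩
    rintro x ⟨⟨Q, hQ⟩, rfl⟩
    haveI := hprob Q hQ
    exact bm_abs_integral_le f hK Q
  have hconv : ∀ f : boundedMeasurable Ω,
      ∃ a, Filter.Tendsto (fun n => ∫ ω, f.1 ω ∂(P n)) (U : Filter ℕ) (nhds a) := by
    intro f
    obtain ⟨hm, K, hK⟩ := f.2
    have hKn : ∀ n, (∫ ω, f.1 ω ∂(P n)) ∈ Set.Icc (-K) K := by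
      intro n
      have h1 : |∫ ω, f.1 ω ∂(P n)| ≤ K := by
        have h2 : |∫ ω, f.1 ω ∂(P n)| ≤ ∫ ω, |f.1 ω| ∂(P n) := by
          simpa using MeasureTheory.norm_integral_le_integral_norm (μ := P n) f.1
        exact h2.trans (bm_abs_integral_le f hK (P n))
      exact ⟨(abs_le.1 h1).1, (abs_le.1 h1).2⟩
    have hle : ↑(Ultrafilter.map (fun n => ∫ ω, f.1 ω ∂(P n)) U)
        ≤ Filter.principal (Set.Icc (-K) K) := by
      rw [Ultrafilter.coe_map, Filter.le_principal_iff]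
      exact Filter.mem_map.2 (Filter.univ_mem' hKn)
    obtain ⟨a, -, ha⟩ := isCompact_Icc.ultrafilter_le_nhds _ hle
    exact ⟨a, by rwa [Ultrafilter.coe_map] at ha⟩
  have hl0 : ∀ f : boundedMeasurable Ω,
      Filter.Tendsto (fun n => ∫ ω, f.1 ω ∂(P n)) (U : Filter ℕ)
        (nhds (limUnder (U : Filter ℕ) (fun n => ∫ ω, f.1 ω ∂(P n)))) :=
    fun f => tendsto_nhds_limUnder (hconv f)
  set L : boundedMeasurable Ω →ₗ[ℝ] ℝ :=
    { toFun := fun f => limUnder (U : Filter ℕ) (fun n => ∫ ω, f.1 ω ∂(P n))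
      map_add' := by
        intro f g
        refine tendsto_nhds_unique (hl0 (f + g)) (((hl0 f).add (hl0 g)).congr fun n => ?_)
        exact (MeasureTheory.integral_add (bm_integrable f (P n)) (bm_integrable g (P n))).symm
      map_smul' := by
        intro c f
        refine tendsto_nhds_unique (hl0 (c • f)) (((hl0 f).const_mul c).congr fun n => ?_)
        rw [show ((c • f).1 : Ω → ℝ) = fun ω => c * f.1 ω from rfl]
        rw [MeasureTheory.integral_const_mul] } with hLdef
  have hb : ∃ C : ℝ, ∀ f : boundedMeasurable Ω,
      |L f| ≤ C * ⨆ Q : Pr, ∫ ω, |f.1 ω| ∂(Q.1) := by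
    refine ⟨1, fun f => ?_⟩
    rw [one_mul]
    refine abs_le.2 ⟨ge_of_tendsto' (hl0 f) fun n => (abs_le.1 (hint f n)).1,
      le_of_tendsto' (hl0 f) fun n => (abs_le.1 (hint f n)).2⟩
  obtain ⟨μ, hμ⟩ := hdual L hb
  have hLm : ∀ m, ε ≤ L (indE (A m) (hAm m)) := by
    intro m
    refine ge_of_tendsto (hl0 (indE (A m) (hAm m))) (Nat.hyperfilter_le_atTop ?_)
    filter_upwards [Filter.eventually_ge_atTop m] with n hn
    rw [indE_apply, MeasureTheory.integral_indicator_const (1 : ℝ) (hAm m)]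
    simpa [MeasureTheory.measureReal_def] using hPAm m n hn
  have h1 : ∀ m, sInt μ (indE (A m) (hAm m)).1
      = (μ.toJordanDecomposition.posPart (A m)).toReal
        - (μ.toJordanDecomposition.negPart (A m)).toReal := by
    intro m
    show (∫ ω, (indE (A m) (hAm m)).1 ω ∂μ.toJordanDecomposition.posPart)
      - ∫ ω, (indE (A m) (hAm m)).1 ω ∂μ.toJordanDecomposition.negPart = _
    rw [indE_apply, MeasureTheory.integral_indicator_const (1 : ℝ) (hAm m),
      MeasureTheory.integral_indicator_const (1 : ℝ) (hAm m)]
    simp [MeasureTheory.measureReal_def]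
  have htend : Filter.Tendsto (fun m => sInt μ (indE (A m) (hAm m)).1) Filter.atTop (nhds 0) := by
    have hp : Filter.Tendsto (fun m => (μ.toJordanDecomposition.posPart (A m)).toReal)
        Filter.atTop (nhds 0) := by
      have := MeasureTheory.tendsto_measure_iInter_atTop
        (μ := μ.toJordanDecomposition.posPart)
        (fun n => (hAm n).nullMeasurableSet) hAa ⟨0, MeasureTheory.measure_ne_top _ _⟩
      rw [hAe, MeasureTheory.measure_empty] at this
      simpa [Function.comp_def] using (ENNReal.tendsto_toReal (by simp)).comp this
    have hn : Filter.Tendsto (fun m => (μ.toJordanDecomposition.negPart (A m)).toReal)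
        Filter.atTop (nhds 0) := by
      have := MeasureTheory.tendsto_measure_iInter_atTop
        (μ := μ.toJordanDecomposition.negPart)
        (fun n => (hAm n).nullMeasurableSet) hAa ⟨0, MeasureTheory.measure_ne_top _ _⟩
      rw [hAe, MeasureTheory.measure_empty] at this
      simpa [Function.comp_def] using (ENNReal.tendsto_toReal (by simp)).comp this
    simp only [h1]
    simpa using hp.sub hn
  have hfin : ε ≤ 0 := by
    refine ge_of_tendsto htend (Filter.Eventually.of_forall fun m => ?_)
    rw [← hμ (indE (A m) (hAm m))]
    exact hLm m
  exact absurd hfin (not_le.2 hε0)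
/-- A nonneg, finitely additive set function on a σ-algebra which is continuous at `∅`
along decreasing sequences extends to a (finite) measure. -/
lemma exists_measure_ofAdditive (m : Set Ω → ℝ) (h0 : m ∅ = 0)
    (hnn : ∀ s : Set Ω, MeasurableSet s → 0 ≤ m s)
    (hadd : ∀ s t : Set Ω, MeasurableSet s → MeasurableSet t → Disjoint s t →
      m (s ∪ t) = m s + m t)
    (hcont : ∀ B : ℕ → Set Ω, (∀ n, MeasurableSet (B n)) → Antitone B → (⋂ n, B n) = ∅ →
      Filter.Tendsto (fun n => m (B n)) Filter.atTop (nhds 0)) :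
    ∃ μ : Measure Ω, MeasureTheory.IsFiniteMeasure μ ∧
      ∀ s : Set Ω, MeasurableSet s → μ s = ENNReal.ofReal (m s) := by
  classical
  have hσadd : ∀ g : ℕ → Set Ω, (∀ i, MeasurableSet (g i)) →
      Pairwise (Function.onFun Disjoint g) →
      HasSum (fun i => m (g i)) (m (⋃ i, g i)) := by
    intro g hgm hgd
    set F : ℕ → Set Ω := fun N => ⋃ i ∈ Finset.range N, g i with hF
    set R : ℕ → Set Ω := fun N => ⋃ i, g (i + N) with hR
    have hFm : ∀ N, MeasurableSet (F N) := fun N =>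
      (Finset.range N).measurableSet_biUnion (fun i _ => hgm i)
    have hRm : ∀ N, MeasurableSet (R N) := fun N => MeasurableSet.iUnion fun i => hgm _
    have hRa : Antitone R := by
      intro M N h
      refine Set.iUnion_subset fun i => ?_
      have he : i + N = (i + (N - M)) + M := by omega
      rw [he]
      exact Set.subset_iUnion (fun j => g (j + M)) (i + (N - M))
    have hRe : (⋂ N, R N) = ∅ := by
      rw [Set.eq_empty_iff_forall_notMem]
      intro ω hω
      have h0' : ω ∈ R 0 := Set.mem_iInter.1 hω 0
      obtain ⟨i, hi⟩ := Set.mem_iUnion.1 h0'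
      have h1' : ω ∈ R (i + 1) := Set.mem_iInter.1 hω (i + 1)
      obtain ⟨j, hj⟩ := Set.mem_iUnion.1 h1'
      exact Set.disjoint_left.1 (hgd (show i ≠ j + (i + 1) by omega)) hi hj
    have hsplit : ∀ N, m (⋃ i, g i) = (∑ i ∈ Finset.range N, m (g i)) + m (R N) := by
      intro N
      have hFR : (⋃ i, g i) = F N ∪ R N := by
        apply Set.Subset.antisymm
        · refine Set.iUnion_subset fun i => ?_
          rcases lt_or_ge i N with h | h
          · exact Set.subset_union_of_subset_left
              (Set.subset_biUnion_of_mem (Finset.mem_range.2 h)) _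
          · refine Set.subset_union_of_subset_right ?_ _
            have he : i = (i - N) + N := by omega
            rw [he]
            exact Set.subset_iUnion (fun j => g (j + N)) (i - N)
        · refine Set.union_subset ?_ ?_
          · exact Set.iUnion₂_subset fun i _ => Set.subset_iUnion g i
          · exact Set.iUnion_subset fun i => Set.subset_iUnion g (i + N)
      have hdisj : Disjoint (F N) (R N) := by
        rw [Set.disjoint_left]
        intro ω hωF hωR
        obtain ⟨i, hi, hωi⟩ := Set.mem_iUnion₂.1 hωF
        obtain ⟨j, hωj⟩ := Set.mem_iUnion.1 hωR
        exact Set.disjoint_left.1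
          (hgd (show i ≠ j + N by have := Finset.mem_range.1 hi; omega)) hωi hωj
      have hFsum : ∀ N, m (F N) = ∑ i ∈ Finset.range N, m (g i) := by
        intro N
        induction N with
        | zero => simpa [hF] using h0
        | succ n ih =>
          have hFe : F (n + 1) = F n ∪ g n := by
            ext ω
            simp only [hF, Set.mem_iUnion, Set.mem_union, Finset.mem_range, exists_prop]
            constructor
            · rintro ⟨i, hi, hω⟩
              rcases Nat.lt_succ_iff_lt_or_eq.1 hi with h | h
              · exact Or.inl ⟨i, h, hω⟩
              · subst h; exact Or.inr hω
            · rintro (⟨i, hi, hω⟩ | hω)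
              · exact ⟨i, by omega, hω⟩
              · exact ⟨n, by omega, hω⟩
          have hdFn : Disjoint (F n) (g n) := by
            rw [Set.disjoint_left]
            intro ω hωF hωn
            obtain ⟨i, hi, hωi⟩ := Set.mem_iUnion₂.1 hωF
            exact Set.disjoint_left.1
              (hgd (show i ≠ n by have := Finset.mem_range.1 hi; omega)) hωi hωn
          rw [hFe, hadd _ _ (hFm n) (hgm n) hdFn, ih, Finset.sum_range_succ]
      rw [hFR, hadd _ _ (hFm N) (hRm N) hdisj, hFsum]
    rw [hasSum_iff_tendsto_nat_of_nonneg (fun i => hnn _ (hgm i))]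
    have htendR := hcont R hRm hRa hRe
    have : Filter.Tendsto (fun N => m (⋃ i, g i) - m (R N)) Filter.atTop
        (nhds (m (⋃ i, g i))) := by
      simpa using (tendsto_const_nhds (x := m (⋃ i, g i))).sub htendR
    refine this.congr fun N => ?_
    rw [hsplit N]; ring
  refine ⟨MeasureTheory.Measure.ofMeasurable (fun s _ => ENNReal.ofReal (m s))
    (by simp [h0]) ?_, ?_, ?_⟩
  · intro g hgm hgd
    have hs := hσadd g hgm hgd
    show ENNReal.ofReal (m (⋃ i, g i)) = ∑' i, ENNReal.ofReal (m (g i))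
    rw [← hs.tsum_eq, ENNReal.ofReal_tsum_of_nonneg (fun i => hnn _ (hgm i)) hs.summable]
  · constructor
    rw [MeasureTheory.Measure.ofMeasurable_apply _ MeasurableSet.univ]
    exact ENNReal.ofReal_lt_top
  · intro s hs
    exact MeasureTheory.Measure.ofMeasurable_apply s hs
lemma repr_of_indicator (l : boundedMeasurable Ω →ₗ[ℝ] ℝ) (D : ℝ)
    (hDb : ∀ (g : boundedMeasurable Ω) (K : ℝ), 0 ≤ K → (∀ ω, |g.1 ω| ≤ K) → |l g| ≤ D * K)
    (μp μm : Measure Ω) [MeasureTheory.IsFiniteMeasure μp] [MeasureTheory.IsFiniteMeasure μm]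
    (hind : ∀ (A : Set Ω) (hA : MeasurableSet A),
      l (indE A hA) = (μp A).toReal - (μm A).toReal)
    (f : boundedMeasurable Ω) :
    l f = (∫ ω, f.1 ω ∂μp) - ∫ ω, f.1 ω ∂μm := by
  classical
  set Li : boundedMeasurable Ω →ₗ[ℝ] ℝ :=
    { toFun := fun g => (∫ ω, g.1 ω ∂μp) - ∫ ω, g.1 ω ∂μm
      map_add' := by
        intro u v
        show (∫ ω, (u + v).1 ω ∂μp) - ∫ ω, (u + v).1 ω ∂μm
          = ((∫ ω, u.1 ω ∂μp) - ∫ ω, u.1 ω ∂μm) + ((∫ ω, v.1 ω ∂μp) - ∫ ω, v.1 ω ∂μm)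
        have e1 : ∀ ν : Measure Ω, MeasureTheory.IsFiniteMeasure ν →
            (∫ ω, (u + v).1 ω ∂ν) = (∫ ω, u.1 ω ∂ν) + ∫ ω, v.1 ω ∂ν := by
          intro ν hν
          rw [show (fun ω => (u + v).1 ω) = fun ω => u.1 ω + v.1 ω from rfl]
          exact MeasureTheory.integral_add (bm_integrable u ν) (bm_integrable v ν)
        rw [e1 μp inferInstance, e1 μm inferInstance]; ring
      map_smul' := by
        intro c u
        show (∫ ω, (c • u).1 ω ∂μp) - ∫ ω, (c • u).1 ω ∂μm
          = (RingHom.id ℝ) c • ((∫ ω, u.1 ω ∂μp) - ∫ ω, u.1 ω ∂μm)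
        have e1 : ∀ ν : Measure Ω,
            (∫ ω, (c • u).1 ω ∂ν) = c * ∫ ω, u.1 ω ∂ν := by
          intro ν
          rw [show (fun ω => (c • u).1 ω) = fun ω => c * u.1 ω from rfl]
          exact MeasureTheory.integral_const_mul c _
        rw [e1 μp, e1 μm]
        simp only [RingHom.id_apply, smul_eq_mul]
        ring } with hLi
  set Df : boundedMeasurable Ω →ₗ[ℝ] ℝ := l - Li with hDf
  have hLiv : ∀ u : boundedMeasurable Ω,
      Li u = (∫ ω, u.1 ω ∂μp) - ∫ ω, u.1 ω ∂μm := fun u => rfl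
  have hDind : ∀ (A : Set Ω) (hA : MeasurableSet A), Df (indE A hA) = 0 := by
    intro A hA
    have hLiind : Li (indE A hA) = (μp A).toReal - (μm A).toReal := by
      rw [hLiv, indE_apply, MeasureTheory.integral_indicator_const (1 : ℝ) hA,
        MeasureTheory.integral_indicator_const (1 : ℝ) hA]
      simp [MeasureTheory.measureReal_def]
    rw [hDf, LinearMap.sub_apply, hind A hA, hLiind, sub_self]
  set M : ℝ := max D 0 + (μp Set.univ).toReal + (μm Set.univ).toReal with hM
  have htrp : (0:ℝ) ≤ (μp Set.univ).toReal := ENNReal.toReal_nonneg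
  have htrm : (0:ℝ) ≤ (μm Set.univ).toReal := ENNReal.toReal_nonneg
  have hM0 : 0 ≤ M := by
    have := le_max_right D 0
    simp only [hM]; positivity
  have hMb : ∀ (g : boundedMeasurable Ω) (K : ℝ), 0 ≤ K → (∀ ω, |g.1 ω| ≤ K) →
      |Df g| ≤ M * K := by
    intro g K hK0 hK
    have h1 : |l g| ≤ max D 0 * K := by
      refine (hDb g K hK0 hK).trans ?_
      exact mul_le_mul_of_nonneg_right (le_max_left D 0) hK0
    have h2 : ∀ ν : Measure Ω, MeasureTheory.IsFiniteMeasure ν →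
        |∫ ω, g.1 ω ∂ν| ≤ (ν Set.univ).toReal * K := by
      intro ν hν
      have h3 : |∫ ω, g.1 ω ∂ν| ≤ ∫ ω, |g.1 ω| ∂ν := by
        simpa using MeasureTheory.norm_integral_le_integral_norm (μ := ν) g.1
      refine h3.trans ?_
      calc ∫ ω, |g.1 ω| ∂ν ≤ ∫ _, K ∂ν :=
            MeasureTheory.integral_mono ((bm_integrable g ν).abs)
              (MeasureTheory.integrable_const K) hK
        _ = (ν Set.univ).toReal * K := by
            rw [MeasureTheory.integral_const]; simp [smul_eq_mul, MeasureTheory.measureReal_def]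
    have h4 : |Df g| ≤ |l g| + |Li g| := by
      rw [hDf, LinearMap.sub_apply]
      exact abs_sub _ _
    have h5 : |Li g| ≤ |∫ ω, g.1 ω ∂μp| + |∫ ω, g.1 ω ∂μm| := by
      rw [hLiv]; exact abs_sub _ _
    have h6 := h2 μp inferInstance
    have h7 := h2 μm inferInstance
    have : M * K = max D 0 * K + (μp Set.univ).toReal * K + (μm Set.univ).toReal * K := by
      rw [hM]; ring
    linarith
  have claim : ∀ ε : ℝ, 0 < ε → |Df f| ≤ M * ε := by
    intro ε hε
    obtain ⟨hmf, K, hK⟩ := f.2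
    obtain ⟨N, hN⟩ := exists_nat_gt (K / ε)
    set Ak : ℤ → Set Ω := fun k => f.1 ⁻¹' (Set.Ico (ε * k) (ε * (k + 1))) with hAk
    have hAkm : ∀ k, MeasurableSet (Ak k) := fun k => hmf measurableSet_Ico
    set I : Finset ℤ := Finset.Icc (-(N : ℤ)) N with hI
    set g : boundedMeasurable Ω := ∑ k ∈ I, (ε * (k : ℝ)) • indE (Ak k) (hAkm k) with hg
    have hDg : Df g = 0 := by
      rw [hg, map_sum]
      refine Finset.sum_eq_zero fun k _ => ?_
      rw [LinearMap.map_smul, hDind (Ak k) (hAkm k), smul_zero]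
    have hmem : ∀ (ω : Ω) (k : ℤ), ω ∈ Ak k ↔ ε * k ≤ f.1 ω ∧ f.1 ω < ε * (k + 1) := by
      intro ω k
      simp [hAk, Set.mem_Ico]
    have hfloor : ∀ (ω : Ω) (k : ℤ), ω ∈ Ak k ↔ k = ⌊f.1 ω / ε⌋ := by
      intro ω k
      rw [hmem]
      constructor
      · rintro ⟨h1, h2⟩
        symm
        rw [Int.floor_eq_iff]
        constructor
        · rw [le_div_iff₀ hε]; linarith
        · rw [div_lt_iff₀ hε]; push_cast; linarith
      · rintro rfl
        have h1 := Int.floor_le (f.1 ω / ε)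
        have h2 := Int.lt_floor_add_one (f.1 ω / ε)
        rw [le_div_iff₀ hε] at h1
        rw [div_lt_iff₀ hε] at h2
        constructor
        · linarith
        · push_cast; linarith
    have hgcoe : ∀ ω, g.1 ω = ∑ k ∈ I, (ε * (k : ℝ)) * (indE (Ak k) (hAkm k)).1 ω := by
      intro ω
      rw [hg, AddSubmonoidClass.coe_finset_sum, Finset.sum_apply]
      rfl
    have hgval : ∀ ω, g.1 ω = ε * (⌊f.1 ω / ε⌋ : ℝ) := by
      intro ω
      have hfK := abs_le.1 (hK ω)
      have hk0I : ⌊f.1 ω / ε⌋ ∈ I := by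
        rw [hI, Finset.mem_Icc]
        constructor
        · rw [Int.le_floor]
          push_cast
          have h1 : -K / ε ≤ f.1 ω / ε :=
            div_le_div_of_nonneg_right (by linarith [hfK.1]) hε.le
          have h2 : -(N : ℝ) ≤ -K / ε := by
            rw [neg_div]
            linarith
          linarith
        · have h1 : (⌊f.1 ω / ε⌋ : ℝ) ≤ f.1 ω / ε := Int.floor_le _
          have h2 : f.1 ω / ε ≤ K / ε := div_le_div_of_nonneg_right hfK.2 hε.le
          have h3 : ((⌊f.1 ω / ε⌋ : ℤ) : ℝ) < (N : ℝ) := by linarith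
          exact_mod_cast h3.le
      rw [hgcoe ω]
      rw [Finset.sum_eq_single_of_mem ⌊f.1 ω / ε⌋ hk0I ?_]
      · have hω : ω ∈ Ak ⌊f.1 ω / ε⌋ := (hfloor ω _).2 rfl
        rw [indE_apply, Set.indicator_of_mem hω, mul_one]
      · intro k _ hkne
        have hω : ω ∉ Ak k := fun h => hkne ((hfloor ω k).1 h)
        rw [indE_apply, Set.indicator_of_notMem hω, mul_zero]
    have hfg : ∀ ω, |f.1 ω - g.1 ω| ≤ ε := by
      intro ω
      rw [hgval ω]
      have hω : ω ∈ Ak ⌊f.1 ω / ε⌋ := (hfloor ω _).2 rfl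
      obtain ⟨h1, h2⟩ := (hmem ω _).1 hω
      rw [abs_of_nonneg (by linarith)]
      push_cast at h2
      linarith
    have hsub : Df f = Df (f - g) := by rw [map_sub, hDg, sub_zero]
    rw [hsub]
    exact hMb (f - g) ε hε.le (fun ω => hfg ω)
  have h0 : |Df f| ≤ 0 := by
    by_contra h
    push_neg at h
    have hc := claim (|Df f| / (M + 1)) (by positivity)
    have hlt : M * (|Df f| / (M + 1)) < |Df f| := by
      rw [mul_div_assoc', div_lt_iff₀ (by linarith : (0:ℝ) < M + 1)]
      nlinarith
    linarith
  have h1 : Df f = 0 := abs_nonpos_iff.1 h0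
  have h2 : l f - Li f = 0 := by
    rw [hDf, LinearMap.sub_apply] at h1
    exact h1
  have h3 := hLiv f
  linarith
lemma forward_measures (Pr : Set (Measure Ω)) (hne : Pr.Nonempty)
    (hprob : ∀ P ∈ Pr, MeasureTheory.IsProbabilityMeasure P)
    (hcont : ∀ A : ℕ → Set Ω, (∀ n, MeasurableSet (A n)) → Antitone A → (⋂ n, A n) = ∅ →
      Filter.Tendsto (fun n => ⨆ P ∈ Pr, P (A n)) Filter.atTop (nhds 0))
    (l : boundedMeasurable Ω →ₗ[ℝ] ℝ) (D : ℝ) (hD0 : 0 ≤ D)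
    (hO : ∀ (g : boundedMeasurable Ω) (t : ℝ), 0 ≤ t →
      (∀ P ∈ Pr, ∫ ω, |g.1 ω| ∂P ≤ t) → |l g| ≤ D * t) :
    ∃ (μp μm : Measure Ω), MeasureTheory.IsFiniteMeasure μp ∧ MeasureTheory.IsFiniteMeasure μm ∧
      ∀ (A : Set Ω) (hA : MeasurableSet A),
        l (indE A hA) = (μp A).toReal - (μm A).toReal := by
  classical
  have hΩ : Nonempty Ω := by
    obtain ⟨P0, hP0⟩ := hne
    haveI := hprob P0 hP0
    by_contra h
    rw [not_nonempty_iff] at h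
    have h1 : P0 Set.univ = 1 := MeasureTheory.measure_univ
    rw [Set.univ_eq_empty_iff.2 h, MeasureTheory.measure_empty] at h1
    exact zero_ne_one h1
  set Adm : boundedMeasurable Ω → Set ℝ :=
    fun f => {r | ∃ g : boundedMeasurable Ω, (∀ ω, 0 ≤ g.1 ω ∧ g.1 ω ≤ f.1 ω) ∧ l g = r}
    with hAdmdef
  have h0mem : ∀ f : boundedMeasurable Ω, (∀ ω, 0 ≤ f.1 ω) → (0:ℝ) ∈ Adm f := by
    intro f hf
    exact ⟨0, fun ω => by simpa using hf ω, map_zero l⟩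
  have hbdd : ∀ (f : boundedMeasurable Ω) (K : ℝ), (∀ ω, f.1 ω ≤ K) → 0 ≤ K →
      BddAbove (Adm f) := by
    intro f K hK hK0
    refine ⟨D * K, ?_⟩
    rintro r ⟨g, hg, rfl⟩
    have h1 : ∀ P ∈ Pr, ∫ ω, |g.1 ω| ∂P ≤ K := by
      intro P hP
      haveI := hprob P hP
      refine bm_abs_integral_le g (fun ω => ?_) P
      rw [abs_of_nonneg (hg ω).1]
      exact (hg ω).2.trans (hK ω)
    exact (le_abs_self _).trans (hO g K hK0 h1)
  set lp : boundedMeasurable Ω → ℝ := fun f => sSup (Adm f) with hlpdef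
  have hKex : ∀ f : boundedMeasurable Ω, ∃ K, (∀ ω, f.1 ω ≤ K) ∧ 0 ≤ K := by
    intro f
    obtain ⟨hm, K, hK⟩ := f.2
    exact ⟨K, fun ω => (abs_le.1 (hK ω)).2,
      le_trans (abs_nonneg _) (hK (Classical.arbitrary Ω))⟩
  have hlp0 : ∀ f, (∀ ω, 0 ≤ f.1 ω) → 0 ≤ lp f := by
    intro f hf
    obtain ⟨K, hK, hK0⟩ := hKex f
    exact le_csSup (hbdd f K hK hK0) (h0mem f hf)
  have hlp_ge : ∀ f, (∀ ω, 0 ≤ f.1 ω) → l f ≤ lp f := by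
    intro f hf
    obtain ⟨K, hK, hK0⟩ := hKex f
    exact le_csSup (hbdd f K hK hK0) ⟨f, fun ω => ⟨hf ω, le_refl _⟩, rfl⟩
  have hlp_add : ∀ f g : boundedMeasurable Ω, (∀ ω, 0 ≤ f.1 ω) → (∀ ω, 0 ≤ g.1 ω) →
      lp (f + g) = lp f + lp g := by
    intro f g hf hg
    obtain ⟨Kf, hKf, hKf0⟩ := hKex f
    obtain ⟨Kg, hKg, hKg0⟩ := hKex g
    have hfg : ∀ ω, 0 ≤ (f + g).1 ω := fun ω => add_nonneg (hf ω) (hg ω)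
    have hKfg : ∀ ω, (f + g).1 ω ≤ Kf + Kg := fun ω => add_le_add (hKf ω) (hKg ω)
    apply le_antisymm
    · refine csSup_le ⟨0, h0mem _ hfg⟩ ?_
      rintro r ⟨h, hh, rfl⟩
      obtain ⟨hhm, Kh, hKh⟩ := h.2
      obtain ⟨hfm, -⟩ := f.2
      have humem : (fun ω => min (h.1 ω) (f.1 ω)) ∈ boundedMeasurable Ω := by
        refine ⟨hhm.min hfm, Kf, fun ω => ?_⟩
        rw [abs_of_nonneg (le_min (hh ω).1 (hf ω))]
        exact (min_le_right _ _).trans (hKf ω)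
      set u : boundedMeasurable Ω := ⟨_, humem⟩ with hu
      set v : boundedMeasurable Ω := h - u with hv
      have hval : ∀ ω, v.1 ω = h.1 ω - min (h.1 ω) (f.1 ω) := fun ω => rfl
      have huadm : l u ∈ Adm f :=
        ⟨u, fun ω => ⟨le_min (hh ω).1 (hf ω), min_le_right _ _⟩, rfl⟩
      have hvadm : l v ∈ Adm g := by
        refine ⟨v, fun ω => ⟨?_, ?_⟩, rfl⟩
        · rw [hval]
          exact sub_nonneg.2 (min_le_left _ _)
        · rw [hval]
          rcases le_total (h.1 ω) (f.1 ω) with hc | hc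
          · rw [min_eq_left hc]
            simpa using hg ω
          · rw [min_eq_right hc]
            have h2 : (hh ω).2 = (hh ω).2 := rfl
            have h3 : h.1 ω ≤ f.1 ω + g.1 ω := (hh ω).2
            linarith
      have hluv : l h = l u + l v := by
        rw [hv, map_sub]; ring
      calc l h = l u + l v := hluv
        _ ≤ lp f + lp g := add_le_add (le_csSup (hbdd f Kf hKf hKf0) huadm)
            (le_csSup (hbdd g Kg hKg hKg0) hvadm)
    · have h1 : ∀ r ∈ Adm f, ∀ s ∈ Adm g, r + s ≤ lp (f + g) := by
        rintro r ⟨u, hu, rfl⟩ s ⟨v, hv, rfl⟩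
        refine le_trans (le_of_eq (map_add l u v).symm)
          (le_csSup (hbdd (f + g) (Kf + Kg) hKfg (by linarith)) ?_)
        exact ⟨u + v, fun ω => ⟨add_nonneg (hu ω).1 (hv ω).1,
          add_le_add (hu ω).2 (hv ω).2⟩, rfl⟩
      have h2 : ∀ s ∈ Adm g, lp f + s ≤ lp (f + g) := by
        intro s hs
        have h3 : lp f ≤ lp (f + g) - s :=
          csSup_le ⟨0, h0mem f hf⟩ (fun r hr => by linarith [h1 r hr s hs])
        linarith
      have h4 : lp g ≤ lp (f + g) - lp f :=
        csSup_le ⟨0, h0mem g hg⟩ (fun s hs => by linarith [h2 s hs])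
      linarith
  have hind0 : ∀ (A : Set Ω) (hA : MeasurableSet A), ∀ ω, 0 ≤ (indE A hA).1 ω := by
    intro A hA ω
    rw [indE_apply]
    exact Set.indicator_nonneg (fun _ _ => zero_le_one) ω
  have hindint : ∀ (A : Set Ω) (hA : MeasurableSet A) (g : boundedMeasurable Ω),
      (∀ ω, 0 ≤ g.1 ω ∧ g.1 ω ≤ (indE A hA).1 ω) →
      ∀ P : Measure Ω, MeasureTheory.IsProbabilityMeasure P →
      ∫ ω, |g.1 ω| ∂P ≤ (P A).toReal := by
    intro A hA g hg P hP
    have h1 : ∀ ω, |g.1 ω| ≤ (indE A hA).1 ω := fun ω => by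
      rw [abs_of_nonneg (hg ω).1]; exact (hg ω).2
    calc ∫ ω, |g.1 ω| ∂P ≤ ∫ ω, (indE A hA).1 ω ∂P :=
          MeasureTheory.integral_mono ((bm_integrable g P).abs)
            (bm_integrable (indE A hA) P) h1
      _ = (P A).toReal := by
          rw [indE_apply, MeasureTheory.integral_indicator_const (1:ℝ) hA]; simp [MeasureTheory.measureReal_def]
  have hlpA : ∀ (A : Set Ω) (hA : MeasurableSet A) (t : ℝ), 0 ≤ t →
      (∀ P ∈ Pr, (P A).toReal ≤ t) → lp (indE A hA) ≤ D * t := by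
    intro A hA t ht hPt
    refine csSup_le ⟨0, h0mem _ (hind0 A hA)⟩ ?_
    rintro r ⟨g, hg, rfl⟩
    refine (le_abs_self _).trans (hO g t ht ?_)
    intro P hP
    exact (hindint A hA g hg P (hprob P hP)).trans (hPt P hP)
  have hlA : ∀ (A : Set Ω) (hA : MeasurableSet A) (t : ℝ), 0 ≤ t →
      (∀ P ∈ Pr, (P A).toReal ≤ t) → |l (indE A hA)| ≤ D * t := by
    intro A hA t ht hPt
    exact hO _ t ht (fun P hP =>
      (hindint A hA _ (fun ω => ⟨hind0 A hA ω, le_refl _⟩) P (hprob P hP)).trans (hPt P hP))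
  set mp : Set Ω → ℝ := fun A => if hA : MeasurableSet A then lp (indE A hA) else 0 with hmpdef
  set mm : Set Ω → ℝ :=
    fun A => if hA : MeasurableSet A then lp (indE A hA) - l (indE A hA) else 0 with hmmdef
  have hmpA : ∀ (A : Set Ω) (hA : MeasurableSet A), mp A = lp (indE A hA) :=
    fun A hA => dif_pos hA
  have hmmA : ∀ (A : Set Ω) (hA : MeasurableSet A),
      mm A = lp (indE A hA) - l (indE A hA) := fun A hA => dif_pos hA
  have hindadd : ∀ (A B : Set Ω) (hA : MeasurableSet A) (hB : MeasurableSet B), Disjoint A B →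
      indE (A ∪ B) (hA.union hB) = indE A hA + indE B hB := by
    intro A B hA hB hd
    apply Subtype.ext
    show (A ∪ B).indicator (fun _ => (1:ℝ)) = A.indicator (fun _ => 1) + B.indicator (fun _ => 1)
    exact Set.indicator_union_of_disjoint hd _
  have hindempty : indE (∅ : Set Ω) MeasurableSet.empty = 0 := by
    apply Subtype.ext
    show (∅ : Set Ω).indicator (fun _ => (1:ℝ)) = 0
    funext ω; simp
  have hlpzero : lp (0 : boundedMeasurable Ω) = 0 := by
    apply le_antisymm
    · refine csSup_le ⟨0, h0mem 0 (fun ω => by simp)⟩ ?_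
      rintro r ⟨g, hg, rfl⟩
      have hgz : g = 0 := Subtype.ext (funext fun ω =>
        le_antisymm (by simpa using (hg ω).2) (hg ω).1)
      rw [hgz, map_zero]
    · exact hlp0 0 (fun ω => by simp)
  -- continuity at ∅
  have hseq : ∀ B : ℕ → Set Ω, (∀ n, MeasurableSet (B n)) → Antitone B → (⋂ n, B n) = ∅ →
      Filter.Tendsto (fun n => mp (B n)) Filter.atTop (nhds 0)
        ∧ Filter.Tendsto (fun n => mm (B n)) Filter.atTop (nhds 0) := by
    intro B hBm hBa hBe
    have hcap := hcont B hBm hBa hBe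
    have hs1 : ∀ n, (⨆ P ∈ Pr, P (B n)) ≤ 1 := by
      intro n
      refine iSup₂_le fun Q hQ => ?_
      haveI := hprob Q hQ
      exact MeasureTheory.prob_le_one
    have hsne : ∀ n, (⨆ P ∈ Pr, P (B n)) ≠ ⊤ :=
      fun n => ne_top_of_le_ne_top ENNReal.one_ne_top (hs1 n)
    have htr : Filter.Tendsto (fun n => (⨆ P ∈ Pr, P (B n)).toReal) Filter.atTop (nhds 0) := by
      simpa [Function.comp_def] using (ENNReal.tendsto_toReal (by simp)).comp hcap
    have hPle : ∀ n, ∀ P ∈ Pr, (P (B n)).toReal ≤ (⨆ P ∈ Pr, P (B n)).toReal := by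
      intro n P hP
      exact ENNReal.toReal_mono (hsne n) (le_biSup (fun P : Measure Ω => P (B n)) hP)
    have hub : ∀ n, mp (B n) ≤ D * (⨆ P ∈ Pr, P (B n)).toReal := by
      intro n
      rw [hmpA _ (hBm n)]
      exact hlpA _ (hBm n) _ ENNReal.toReal_nonneg (hPle n)
    have hlb : ∀ n, 0 ≤ mp (B n) := by
      intro n
      rw [hmpA _ (hBm n)]
      exact hlp0 _ (hind0 _ _)
    constructor
    · refine tendsto_of_tendsto_of_tendsto_of_le_of_le tendsto_const_nhds ?_ hlb hub
      simpa using htr.const_mul D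
    · have hub2 : ∀ n, mm (B n) ≤ 2 * D * (⨆ P ∈ Pr, P (B n)).toReal := by
        intro n
        rw [hmmA _ (hBm n)]
        have h1 := hlpA _ (hBm n) _ ENNReal.toReal_nonneg (hPle n)
        have h2 := abs_le.1 (hlA _ (hBm n) _ ENNReal.toReal_nonneg (hPle n))
        linarith [h2.1]
      have hlb2 : ∀ n, 0 ≤ mm (B n) := by
        intro n
        rw [hmmA _ (hBm n)]
        linarith [hlp_ge _ (hind0 (B n) (hBm n))]
      refine tendsto_of_tendsto_of_tendsto_of_le_of_le tendsto_const_nhds ?_ hlb2 hub2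
      simpa using htr.const_mul (2 * D)
  have hmp0 : mp ∅ = 0 := by
    rw [hmpA _ MeasurableSet.empty, hindempty, hlpzero]
  have hmm0 : mm ∅ = 0 := by
    rw [hmmA _ MeasurableSet.empty, hindempty, hlpzero, map_zero]
    ring
  have hmpnn : ∀ s : Set Ω, MeasurableSet s → 0 ≤ mp s := by
    intro s hs
    rw [hmpA _ hs]
    exact hlp0 _ (hind0 _ _)
  have hmmnn : ∀ s : Set Ω, MeasurableSet s → 0 ≤ mm s := by
    intro s hs
    rw [hmmA _ hs]
    linarith [hlp_ge _ (hind0 s hs)]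
  have hmpadd : ∀ s t : Set Ω, MeasurableSet s → MeasurableSet t → Disjoint s t →
      mp (s ∪ t) = mp s + mp t := by
    intro s t hs ht hd
    rw [hmpA _ (hs.union ht), hmpA _ hs, hmpA _ ht, hindadd s t hs ht hd,
      hlp_add _ _ (hind0 _ _) (hind0 _ _)]
  have hmmadd : ∀ s t : Set Ω, MeasurableSet s → MeasurableSet t → Disjoint s t →
      mm (s ∪ t) = mm s + mm t := by
    intro s t hs ht hd
    rw [hmmA _ (hs.union ht), hmmA _ hs, hmmA _ ht, hindadd s t hs ht hd,
      hlp_add _ _ (hind0 _ _) (hind0 _ _), map_add]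
    ring
  obtain ⟨μp, hμpf, hμp⟩ := exists_measure_ofAdditive mp hmp0 hmpnn hmpadd
    (fun B h1 h2 h3 => (hseq B h1 h2 h3).1)
  obtain ⟨μm, hμmf, hμm⟩ := exists_measure_ofAdditive mm hmm0 hmmnn hmmadd
    (fun B h1 h2 h3 => (hseq B h1 h2 h3).2)
  refine ⟨μp, μm, hμpf, hμmf, ?_⟩
  intro A hA
  rw [hμp A hA, hμm A hA, ENNReal.toReal_ofReal (hmpnn A hA),
    ENNReal.toReal_ofReal (hmmnn A hA), hmpA A hA, hmmA A hA]
  ring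

end Aux

/-- Equivalence of: (i) the capacity `c` is continuous along decreasing sequences of sets with
empty intersection, and (ii) every linear functional on `ℒ^∞` which is continuous for the norm
`f ↦ sup_{P ∈ Pr} E_P[|f|]` is represented by a finite signed measure. -/
theorem capacity_continuous_iff_dual_repr
    {Ω : Type*} [MeasurableSpace Ω] (Pr : Set (Measure Ω))
    (hne : Pr.Nonempty) (hprob : ∀ P ∈ Pr, IsProbabilityMeasure P) :
    (∀ A : ℕ → Set Ω, (∀ n, MeasurableSet (A n)) → Antitone A → (⋂ n, A n) = ∅ →
        Tendsto (fun n => ⨆ P ∈ Pr, P (A n)) atTop (𝓝 0)) ↔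
      (∀ l : boundedMeasurable Ω →ₗ[ℝ] ℝ,
        (∃ C : ℝ, ∀ f : boundedMeasurable Ω,
          |l f| ≤ C * ⨆ P : Pr, ∫ ω, |f.1 ω| ∂(P.1)) →
        ∃ μ : SignedMeasure Ω, ∀ f : boundedMeasurable Ω, l f = sInt μ f.1) := by
  constructor
  · intro hcont l hCex
    obtain ⟨C, hC⟩ := hCex
    have hO : ∀ (g : boundedMeasurable Ω) (t : ℝ), 0 ≤ t →
        (∀ P ∈ Pr, ∫ ω, |g.1 ω| ∂P ≤ t) → |l g| ≤ |C| * t := by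
      intro g t ht hPt
      have hS0 : 0 ≤ ⨆ P : Pr, ∫ ω, |g.1 ω| ∂(P.1) :=
        Real.iSup_nonneg (fun P => MeasureTheory.integral_nonneg (fun ω => abs_nonneg _))
      have hSle : (⨆ P : Pr, ∫ ω, |g.1 ω| ∂(P.1)) ≤ t :=
        Real.iSup_le (fun P => hPt P.1 P.2) ht
      calc |l g| ≤ C * ⨆ P : Pr, ∫ ω, |g.1 ω| ∂(P.1) := hC g
        _ ≤ |C| * ⨆ P : Pr, ∫ ω, |g.1 ω| ∂(P.1) :=
            mul_le_mul_of_nonneg_right (le_abs_self C) hS0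
        _ ≤ |C| * t := mul_le_mul_of_nonneg_left hSle (abs_nonneg C)
    obtain ⟨μp, μm, hfp, hfm, hpm⟩ :=
      forward_measures Pr hne hprob hcont l |C| (abs_nonneg C) hO
    haveI := hfp
    haveI := hfm
    refine ⟨μp.toSignedMeasure - μm.toSignedMeasure, fun f => ?_⟩
    rw [sInt_sub_eq μp μm f]
    refine repr_of_indicator l |C| ?_ μp μm (fun A hA => hpm A hA) f
    intro g K hK0 hK
    refine hO g K hK0 (fun P hP => ?_)
    haveI := hprob P hP
    exact bm_abs_integral_le g hK P
  · intro hdual A hAm hAa hAe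
    exact reverse_dir Pr hprob hdual A hAm hAa hAe
end

section
/- Suppose that for every linear functional l : H_c → ℝ, where H_c := {f : Ω → ℝ measurable with sup_{P∈𝒫} E_P[|f|] < ∞}, for which there exists a constant C with |l(f)| ≤ C · sup_{P∈𝒫} E_P[|f|] for all f ∈ H_c, the set function 𝔉 ∋ A ↦ l(1_A) is countably additive. Then for every decreasing sequence (A_n) ⊆ 𝔉 with ⋂_n A_n = ∅ one has sup_{P∈𝒫} P(A_n) → 0 as n → ∞. -/
open MeasureTheory Filter Topology Set
open scoped ENNReal

/-- `H_c`: the space of measurable functions `f` with `sup_{P ∈ Pr} E_P[|f|] < ∞`,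
as a submodule of `Ω → ℝ`. -/
def Hc (Ω : Type*) [MeasurableSpace Ω] (Pr : Set (Measure Ω)) : Submodule ℝ (Ω → ℝ) where
  carrier := {f | Measurable f ∧ (⨆ P : Pr, ∫⁻ ω, ENNReal.ofReal |f ω| ∂(P.1)) < ⊤}
  zero_mem' := by
    refine ⟨measurable_const, lt_of_le_of_lt (iSup_le fun P => le_of_eq ?_)
      (by simp : (0:ℝ≥0∞) < ⊤)⟩
    simp
  add_mem' := by
    rintro f g ⟨hf, hfi⟩ ⟨hg, hgi⟩
    refine ⟨hf.add hg, ?_⟩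
    have hb : ∀ P : Pr, ∫⁻ ω, ENNReal.ofReal |(f + g) ω| ∂(P.1) ≤
        (⨆ P : Pr, ∫⁻ ω, ENNReal.ofReal |f ω| ∂(P.1)) +
        (⨆ P : Pr, ∫⁻ ω, ENNReal.ofReal |g ω| ∂(P.1)) := by
      intro P
      calc ∫⁻ ω, ENNReal.ofReal |(f + g) ω| ∂(P.1)
          ≤ ∫⁻ ω, (ENNReal.ofReal |f ω| + ENNReal.ofReal |g ω|) ∂(P.1) := by
            refine lintegral_mono fun ω => ?_
            calc ENNReal.ofReal |(f + g) ω| ≤ ENNReal.ofReal (|f ω| + |g ω|) :=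
                  ENNReal.ofReal_le_ofReal (abs_add_le _ _)
              _ ≤ _ := ENNReal.ofReal_add_le
        _ = (∫⁻ ω, ENNReal.ofReal |f ω| ∂(P.1)) + ∫⁻ ω, ENNReal.ofReal |g ω| ∂(P.1) :=
            lintegral_add_left (ENNReal.measurable_ofReal.comp hf.abs) _
        _ ≤ _ := add_le_add
            (le_iSup (fun P : Pr => ∫⁻ ω, ENNReal.ofReal |f ω| ∂(P.1)) P)
            (le_iSup (fun P : Pr => ∫⁻ ω, ENNReal.ofReal |g ω| ∂(P.1)) P)
    exact lt_of_le_of_lt (iSup_le hb) (ENNReal.add_lt_top.mpr ⟨hfi, hgi⟩)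
  smul_mem' := by
    rintro c f ⟨hf, hfi⟩
    refine ⟨(hf.const_mul c : Measurable fun ω => c * f ω), ?_⟩
    have hb : ∀ P : Pr, ∫⁻ ω, ENNReal.ofReal |(c • f) ω| ∂(P.1) ≤
        ENNReal.ofReal |c| * ⨆ P : Pr, ∫⁻ ω, ENNReal.ofReal |f ω| ∂(P.1) := by
      intro P
      calc ∫⁻ ω, ENNReal.ofReal |(c • f) ω| ∂(P.1)
          = ∫⁻ ω, ENNReal.ofReal |c| * ENNReal.ofReal |f ω| ∂(P.1) := by
            refine lintegral_congr fun ω => ?_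
            rw [Pi.smul_apply, smul_eq_mul, abs_mul, ENNReal.ofReal_mul (abs_nonneg c)]
        _ = ENNReal.ofReal |c| * ∫⁻ ω, ENNReal.ofReal |f ω| ∂(P.1) :=
            lintegral_const_mul _ (ENNReal.measurable_ofReal.comp hf.abs)
        _ ≤ _ := mul_le_mul' le_rfl
            (le_iSup (fun P : Pr => ∫⁻ ω, ENNReal.ofReal |f ω| ∂(P.1)) P)
    exact lt_of_le_of_lt (iSup_le hb) (ENNReal.mul_lt_top ENNReal.ofReal_lt_top hfi)

/-- If every norm-continuous linear functional on `H_c` induces a countably additive set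
function `A ↦ l(1_A)`, then the capacity `c` is continuous along decreasing sequences of
sets with empty intersection. -/
theorem capacity_continuous_of_Hc_dual_countablyAdditive
    {Ω : Type*} [MeasurableSpace Ω] (Pr : Set (Measure Ω))
    (hne : Pr.Nonempty) (hprob : ∀ P ∈ Pr, IsProbabilityMeasure P)
    (hl : ∀ l : Hc Ω Pr →ₗ[ℝ] ℝ,
      (∃ C : ℝ, ∀ f : Hc Ω Pr,
        |l f| ≤ C * (⨆ P : Pr, ∫⁻ ω, ENNReal.ofReal |f.1 ω| ∂(P.1)).toReal) →
      ∀ A : ℕ → Set Ω, (∀ i, MeasurableSet (A i)) → Pairwise (Function.onFun Disjoint A) →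
        ∀ (hm : ∀ i, (A i).indicator (fun _ => (1:ℝ)) ∈ Hc Ω Pr)
          (hU : (⋃ i, A i).indicator (fun _ => (1:ℝ)) ∈ Hc Ω Pr),
          HasSum (fun i => l ⟨(A i).indicator (fun _ => (1:ℝ)), hm i⟩)
            (l ⟨(⋃ i, A i).indicator (fun _ => (1:ℝ)), hU⟩)) :
    ∀ A : ℕ → Set Ω, (∀ n, MeasurableSet (A n)) → Antitone A → (⋂ n, A n) = ∅ →
      Tendsto (fun n => ⨆ P ∈ Pr, P (A n)) atTop (𝓝 0) := by
  
  classical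
  intro A hA hanti hiA
  haveI : Nonempty ↥Pr := hne.to_subtype
  set c : ℕ → ℝ≥0∞ := fun n => ⨆ P ∈ Pr, P (A n) with hc_def
  have hc_anti : Antitone c := fun m n hmn => iSup₂_mono fun P _ => measure_mono (hanti hmn)
  have htend : Tendsto c atTop (𝓝 (⨅ n, c n)) := tendsto_atTop_iInf hc_anti
  rcases eq_or_ne (⨅ n, c n) 0 with h0 | hε
  · rwa [h0] at htend
  exfalso
  -- basic facts about `c` and `ε`
  have hc_le_one : ∀ n, c n ≤ 1 := by
    intro n
    refine iSup₂_le fun P hP => ?_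
    haveI := hprob P hP
    exact prob_le_one
  have hε_le : (⨅ n, c n) ≤ 1 := (iInf_le _ 0).trans (hc_le_one 0)
  have hε_top : (⨅ n, c n) ≠ ⊤ := ne_top_of_le_ne_top ENNReal.one_ne_top hε_le
  have hc_top : ∀ n, c n ≠ ⊤ := fun n => ne_top_of_le_ne_top ENNReal.one_ne_top (hc_le_one n)
  set εr : ℝ := (⨅ n, c n).toReal with hεr_def
  have hεr_pos : 0 < εr := ENNReal.toReal_pos hε hε_top
  -- `c` in subtype form
  have hc_sub : ∀ n, c n = ⨆ P : Pr, P.1 (A n) := by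
    intro n
    rw [hc_def]
    exact (iSup_subtype'' Pr (fun P => P (A n))).symm
  have hcR : ∀ n, (c n).toReal = ⨆ P : Pr, (P.1 (A n)).toReal := by
    intro n
    rw [hc_sub n]
    exact ENNReal.toReal_iSup fun P : Pr => by
      haveI := hprob P.1 P.2
      exact ne_top_of_le_ne_top ENNReal.one_ne_top prob_le_one
  -- indicators belong to `Hc`
  have hmem : ∀ S : Set Ω, MeasurableSet S →
      (S.indicator fun _ => (1:ℝ)) ∈ Hc Ω Pr := by
    intro S hS
    refine ⟨(measurable_const (a := (1:ℝ))).indicator hS, ?_⟩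
    refine lt_of_le_of_lt (iSup_le fun P => ?_) (by norm_num : (1:ℝ≥0∞) < ⊤)
    haveI := hprob P.1 P.2
    calc ∫⁻ ω, ENNReal.ofReal |S.indicator (fun _ => (1:ℝ)) ω| ∂P.1
        ≤ ∫⁻ _, 1 ∂P.1 := by
          refine lintegral_mono fun ω => ?_
          by_cases h : ω ∈ S <;>
            simp [Set.indicator_of_mem, Set.indicator_of_notMem, h]
      _ = 1 := by simp
  set In : ℕ → ↥(Hc Ω Pr) := fun m => ⟨_, hmem (A m) (hA m)⟩ with hIn_def
  -- integrability
  have hint : ∀ (f : ↥(Hc Ω Pr)) (P : Pr), Integrable f.1 P.1 := by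
    rintro ⟨f, hfm, hfi⟩ P
    refine ⟨hfm.aestronglyMeasurable, ?_⟩
    rw [HasFiniteIntegral]
    calc ∫⁻ ω, ‖f ω‖₊ ∂P.1 = ∫⁻ ω, ENNReal.ofReal |f ω| ∂P.1 := by
          refine lintegral_congr fun ω => ?_
          rw [← Real.norm_eq_abs, ofReal_norm_eq_enorm, enorm_eq_nnnorm]
      _ ≤ ⨆ P : Pr, ∫⁻ ω, ENNReal.ofReal |f ω| ∂P.1 :=
          le_iSup (fun P : Pr => ∫⁻ ω, ENNReal.ofReal |f ω| ∂P.1) P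
      _ < ⊤ := hfi
  -- the seminorm bound
  set M : ↥(Hc Ω Pr) → ℝ :=
    fun f => (⨆ P : Pr, ∫⁻ ω, ENNReal.ofReal |f.1 ω| ∂P.1).toReal with hM_def
  have habs : ∀ (f : ↥(Hc Ω Pr)) (P : Pr) (n : ℕ),
      |∫ ω in A n, f.1 ω ∂P.1| ≤ M f := by
    intro f P n
    have hi := hint f P
    have h1 : |∫ ω in A n, f.1 ω ∂P.1| ≤ ∫ ω in A n, |f.1 ω| ∂P.1 := by
      simpa [Real.norm_eq_abs] using
        norm_integral_le_integral_norm (μ := P.1.restrict (A n)) f.1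
    have h2 : ∫ ω in A n, |f.1 ω| ∂P.1 ≤ ∫ ω, |f.1 ω| ∂P.1 :=
      integral_mono_measure Measure.restrict_le_self
        (Filter.Eventually.of_forall fun ω => abs_nonneg _) hi.abs
    have h3 : ∫ ω, |f.1 ω| ∂P.1
        = (∫⁻ ω, ENNReal.ofReal |f.1 ω| ∂P.1).toReal :=
      integral_eq_lintegral_of_nonneg_ae
        (Filter.Eventually.of_forall fun ω => abs_nonneg _)
        f.2.1.abs.aestronglyMeasurable
    have h4 : (∫⁻ ω, ENNReal.ofReal |f.1 ω| ∂P.1).toReal ≤ M f :=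
      ENNReal.toReal_mono f.2.2.ne
        (le_iSup (fun P : Pr => ∫⁻ ω, ENNReal.ofReal |f.1 ω| ∂P.1) P)
    linarith
  -- the family of functionals `g n`
  set g : ℕ → ↥(Hc Ω Pr) → ℝ :=
    fun n f => ⨆ P : Pr, ∫ ω in A n, f.1 ω ∂P.1 with hg_def
  have hbdd : ∀ n (f : ↥(Hc Ω Pr)),
      BddAbove (Set.range fun P : Pr => ∫ ω in A n, f.1 ω ∂P.1) := by
    intro n f
    refine ⟨M f, ?_⟩
    rintro x ⟨P, rfl⟩
    exact (abs_le.1 (habs f P n)).2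
  have hg_le : ∀ n f, g n f ≤ M f := fun n f =>
    ciSup_le fun P => (abs_le.1 (habs f P n)).2
  have hg_ge : ∀ n f, -M f ≤ g n f := by
    intro n f
    obtain ⟨P0⟩ := (inferInstance : Nonempty ↥Pr)
    exact le_trans (abs_le.1 (habs f P0 n)).1
      (le_ciSup (hbdd n f) P0)
  have hg_add : ∀ n (f h : ↥(Hc Ω Pr)), g n (f + h) ≤ g n f + g n h := by
    intro n f h
    refine ciSup_le fun P => ?_
    have he : ∫ ω in A n, (f + h).1 ω ∂P.1
        = (∫ ω in A n, f.1 ω ∂P.1) + ∫ ω in A n, h.1 ω ∂P.1 := by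
      have : ∫ ω in A n, (f + h).1 ω ∂P.1
          = ∫ ω in A n, (f.1 ω + h.1 ω) ∂P.1 := rfl
      rw [this]
      exact integral_add (hint f P).restrict (hint h P).restrict
    rw [he]
    exact add_le_add (le_ciSup (hbdd n f) P) (le_ciSup (hbdd n h) P)
  have hg_smul : ∀ (r : ℝ), 0 < r → ∀ n (f : ↥(Hc Ω Pr)),
      g n (r • f) = r * g n f := by
    intro r hr n f
    have he : ∀ P : Pr, ∫ ω in A n, (r • f).1 ω ∂P.1
        = r * ∫ ω in A n, f.1 ω ∂P.1 := by
      intro P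
      have : ∫ ω in A n, (r • f).1 ω ∂P.1
          = ∫ ω in A n, r • f.1 ω ∂P.1 := rfl
      rw [this, integral_smul, smul_eq_mul]
    calc g n (r • f) = ⨆ P : Pr, r * ∫ ω in A n, f.1 ω ∂P.1 := iSup_congr he
      _ = r * g n f := (Real.mul_iSup_of_nonneg hr.le _).symm
  -- the sublinear functional `p`
  set p : ↥(Hc Ω Pr) → ℝ := fun f => limsup (fun n => g n f) atTop with hp_def
  have hbu : ∀ f, IsBoundedUnder (· ≤ ·) atTop (fun n => g n f) := fun f =>
    isBoundedUnder_of ⟨M f, fun n => hg_le n f⟩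
  have hbl : ∀ f, IsBoundedUnder (· ≥ ·) atTop (fun n => g n f) := fun f =>
    isBoundedUnder_of ⟨-M f, fun n => hg_ge n f⟩
  have hcb : ∀ f, IsCoboundedUnder (· ≤ ·) atTop (fun n => g n f) := fun f =>
    (hbl f).isCoboundedUnder_le
  have hp_le_M : ∀ f, p f ≤ M f := fun f =>
    limsup_le_of_le (hcb f) (Filter.Eventually.of_forall fun n => hg_le n f)
  have hp_add : ∀ f h : ↥(Hc Ω Pr), p (f + h) ≤ p f + p h := by
    intro f h
    have h1 : (fun n => g n (f + h)) ≤ᶠ[atTop]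
        (fun n => g n f) + fun n => g n h :=
      Filter.Eventually.of_forall fun n => hg_add n f h
    calc p (f + h)
        ≤ limsup ((fun n => g n f) + fun n => g n h) atTop :=
          limsup_le_limsup h1 (hcb (f + h))
            (isBoundedUnder_le_add (hbu f) (hbu h))
      _ ≤ p f + p h := limsup_add_le (hbl f) (hbu f) (hcb h) (hbu h)
  have hp_smul : ∀ (r : ℝ), 0 < r → ∀ f : ↥(Hc Ω Pr), p (r • f) = r * p f := by
    intro r hr f
    have hgu : IsBoundedUnder (· ≤ ·) atTop fun n =>
        (OrderIso.mulLeft₀ r hr) (g n f) :=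
      isBoundedUnder_of ⟨r * M f, fun n =>
        mul_le_mul_of_nonneg_left (hg_le n f) hr.le⟩
    have hgl : IsBoundedUnder (· ≥ ·) atTop fun n =>
        (OrderIso.mulLeft₀ r hr) (g n f) :=
      isBoundedUnder_of ⟨r * (-M f), fun n =>
        mul_le_mul_of_nonneg_left (hg_ge n f) hr.le⟩
    have key := (OrderIso.mulLeft₀ r hr).limsup_apply (f := atTop)
      (u := fun n => g n f) (hbu f) (hcb f) hgu hgl.isCoboundedUnder_le
    have h1 : p (r • f) = limsup (fun n => r * g n f) atTop := by
      rw [hp_def]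
      exact limsup_congr (Filter.Eventually.of_forall fun n => hg_smul r hr n f)
    have key2 : r * limsup (fun n => g n f) atTop
        = limsup (fun n => r * g n f) atTop := key
    rw [h1, ← key2]
  -- integrals of indicators
  have hIint : ∀ (m n : ℕ) (P : Measure Ω), m ≤ n →
      ∫ ω in A n, (A m).indicator (fun _ => (1:ℝ)) ω ∂P = (P (A n)).toReal := by
    intro m n P hmn
    rw [setIntegral_congr_fun (hA n)
      (fun ω hω => Set.indicator_of_mem (hanti hmn hω) _)]
    simp [measureReal_def]
  have hgI : ∀ m n, m ≤ n → g n (In m) = (c n).toReal := by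
    intro m n hmn
    rw [hcR n, hg_def]
    exact iSup_congr fun P => hIint m n P.1 hmn
  have hctend : Tendsto (fun n => (c n).toReal) atTop (𝓝 εr) :=
    (ENNReal.tendsto_toReal hε_top).comp htend
  have hp_In : ∀ m, p (In m) = εr := by
    intro m
    have h1 : p (In m) = limsup (fun n => (c n).toReal) atTop := by
      refine limsup_congr ?_
      filter_upwards [eventually_ge_atTop m] with n hn
      exact hgI m n hn
    rw [h1, hctend.limsup_eq]
  have hp_neg0 : -εr ≤ p (-In 0) := by
    have hneg : ∀ (n : ℕ) (P : Pr),
        ∫ ω in A n, (-In 0).1 ω ∂P.1 = -(P.1 (A n)).toReal := by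
      intro n P
      have : ∫ ω in A n, (-In 0).1 ω ∂P.1
          = ∫ ω in A n, -((In 0).1 ω) ∂P.1 := rfl
      rw [this, integral_neg, hIint 0 n P.1 (Nat.zero_le n)]
    have hlow : ∀ n, -(c n).toReal ≤ g n (-In 0) := by
      intro n
      obtain ⟨P0, hP0⟩ := hne
      have h2 : (P0 (A n)).toReal ≤ (c n).toReal :=
        ENNReal.toReal_mono (hc_top n)
          (le_iSup₂ (f := fun (P : Measure Ω) (_ : P ∈ Pr) => P (A n)) P0 hP0)
      have h3 : -(c n).toReal ≤ -(P0 (A n)).toReal := neg_le_neg h2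
      refine h3.trans ?_
      have := le_ciSup (hbdd n (-In 0)) (⟨P0, hP0⟩ : ↥Pr)
      rwa [hneg n ⟨P0, hP0⟩] at this
    have hlim : Tendsto (fun n => -(c n).toReal) atTop (𝓝 (-εr)) := hctend.neg
    calc -εr = limsup (fun n => -(c n).toReal) atTop := hlim.limsup_eq.symm
      _ ≤ p (-In 0) := limsup_le_limsup (Filter.Eventually.of_forall hlow)
          (hlim.isBoundedUnder_ge).isCoboundedUnder_le (hbu (-In 0))
  have hp_diff : ∀ m, p (In 0 - In m) ≤ 0 := by
    intro m
    have hz : ∀ n, m ≤ n → g n (In 0 - In m) = 0 := by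
      intro n hmn
      have he : ∀ P : Pr, ∫ ω in A n, (In 0 - In m).1 ω ∂P.1 = 0 := by
        intro P
        have : ∫ ω in A n, (In 0 - In m).1 ω ∂P.1
            = ∫ ω in A n, ((In 0).1 ω - (In m).1 ω) ∂P.1 := rfl
        rw [this, integral_sub (hint (In 0) P).restrict (hint (In m) P).restrict,
          hIint 0 n P.1 (Nat.zero_le n), hIint m n P.1 hmn, sub_self]
      rw [hg_def]
      simp only [he]
      exact ciSup_const
    have h1 : p (In 0 - In m) = limsup (fun _ : ℕ => (0:ℝ)) atTop := by
      refine limsup_congr ?_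
      filter_upwards [eventually_ge_atTop m] with n hn
      exact hz n hn
    rw [h1, limsup_const]
  have hp_zero : p (0 : ↥(Hc Ω Pr)) = 0 := by
    have hg0 : ∀ n, g n (0 : ↥(Hc Ω Pr)) = 0 := by
      intro n
      rw [hg_def]
      have : ∀ P : Pr, ∫ ω in A n, (0 : ↥(Hc Ω Pr)).1 ω ∂P.1 = 0 := by
        intro P
        simp
      simp only [this]
      exact ciSup_const
    rw [hp_def]
    simp only [hg0]
    exact limsup_const 0
  -- the base point is nonzero
  have hA0 : (A 0).Nonempty := by
    rcases Set.eq_empty_or_nonempty (A 0) with h | h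
    · exfalso
      apply hε
      refine le_antisymm ?_ zero_le
      refine (iInf_le _ 0).trans ?_
      simp [hc_def, h]
    · exact h
  have hx0 : In 0 ≠ 0 := by
    obtain ⟨ω, hω⟩ := hA0
    intro h
    have := congrFun (congrArg Subtype.val h) ω
    simp [hIn_def, Set.indicator_of_mem hω] at this
  -- Hahn-Banach extension
  obtain ⟨l, hl_agree, hl_le⟩ :=
    exists_extension_of_le_sublinear (LinearPMap.mkSpanSingleton (In 0) εr hx0) p
      (fun r hr x => hp_smul r hr x)
      (fun x y => hp_add x y)
      (by
        rintro ⟨x, hx⟩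
        obtain ⟨t, rfl⟩ := Submodule.mem_span_singleton.1 hx
        have happ : (LinearPMap.mkSpanSingleton (In 0) εr hx0) ⟨t • In 0, hx⟩
            = t • εr := LinearPMap.mkSpanSingleton'_apply _ _ _ t hx
        rw [happ]
        rcases lt_trichotomy t 0 with ht | rfl | ht
        · have h1 : t • In 0 = (-t) • (-In 0) := by rw [smul_neg, neg_smul, neg_neg]
          have h2 : p (t • In 0) = (-t) * p (-In 0) := by
            rw [h1]; exact hp_smul (-t) (by linarith) (-In 0)
          have h3 := mul_le_mul_of_nonneg_left hp_neg0 (by linarith : (0:ℝ) ≤ -t)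
          rw [smul_eq_mul, h2]
          nlinarith
        · simp only [zero_smul, smul_eq_mul, zero_mul]
          rw [hp_zero]
        · rw [smul_eq_mul, hp_smul t ht (In 0), hp_In 0])
  -- the bound on `l`
  have hMneg : ∀ f : ↥(Hc Ω Pr), M (-f) = M f := by
    intro f
    rw [hM_def]
    refine congrArg ENNReal.toReal
      (iSup_congr fun P => lintegral_congr fun ω => ?_)
    have : ((-f : ↥(Hc Ω Pr)) : Ω → ℝ) ω = -(f.1 ω) := rfl
    rw [this, abs_neg]
  have hC : ∃ C : ℝ, ∀ f : ↥(Hc Ω Pr),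
      |l f| ≤ C * (⨆ P : Pr, ∫⁻ ω, ENNReal.ofReal |f.1 ω| ∂P.1).toReal := by
    refine ⟨1, fun f => ?_⟩
    rw [one_mul]
    rw [abs_le]
    constructor
    · have h1 : l (-f) ≤ p (-f) := hl_le (-f)
      have h2 : p (-f) ≤ M f := (hp_le_M (-f)).trans_eq (hMneg f)
      rw [map_neg] at h1
      have := h1.trans h2
      linarith
    · exact (hl_le f).trans (hp_le_M f)
  -- `l` equals `εr` on all the indicators `In m`
  have hl0 : l (In 0) = εr := by
    have hmem0 : In 0 ∈ (LinearPMap.mkSpanSingleton (σ := RingHom.id ℝ) (In 0) εr hx0).domain :=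
      (Submodule.mem_span_singleton_self (In 0) :
        In 0 ∈ Submodule.span ℝ {In 0})
    have := hl_agree ⟨In 0, hmem0⟩
    rw [this]
    exact LinearPMap.mkSpanSingleton_apply ℝ ℝ (σ := RingHom.id ℝ) hx0 εr
  have hlIn : ∀ m, l (In m) = εr := by
    intro m
    have h1 : l (In m) ≤ εr := (hl_le (In m)).trans_eq (hp_In m)
    have h2 : l (In 0 - In m) ≤ 0 := (hl_le _).trans (hp_diff m)
    have h3 : l (In 0) = l (In m) + l (In 0 - In m) := by
      rw [← map_add]
      congr 1
      abel
    rw [hl0] at h3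
    linarith
  -- the disjoint family
  set B : ℕ → Set Ω := fun i => A i \ A (i + 1) with hB_def
  have hBm : ∀ i, MeasurableSet (B i) := fun i => (hA i).diff (hA (i + 1))
  have hBd : Pairwise (Function.onFun Disjoint B) := by
    have key : ∀ {i j : ℕ}, i < j → Disjoint (B i) (B j) := by
      intro i j hij
      refine Set.disjoint_left.2 fun ω hωi hωj => ?_
      exact hωi.2 (hanti (Nat.succ_le_of_lt hij) hωj.1)
    intro i j hij
    rcases hij.lt_or_gt with h | h
    · exact key h
    · exact (key h).symm
  have hBU : (⋃ i, B i) = A 0 := by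
    apply Set.Subset.antisymm
    · exact Set.iUnion_subset fun i => Set.diff_subset.trans (hanti (Nat.zero_le i))
    · intro ω hω
      have hex : ∃ n, ω ∉ A n := by
        by_contra hcon
        push_neg at hcon
        have : ω ∈ ⋂ n, A n := Set.mem_iInter.2 hcon
        rw [hiA] at this
        exact this
      have hk : ω ∉ A (Nat.find hex) := Nat.find_spec hex
      have hk0 : Nat.find hex ≠ 0 := fun h => hk (h ▸ hω)
      obtain ⟨j, hj⟩ := Nat.exists_eq_succ_of_ne_zero hk0
      refine Set.mem_iUnion.2 ⟨j, ?_, ?_⟩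
      · have hmin := Nat.find_min hex (by omega : j < Nat.find hex)
        exact not_not.1 hmin
      · have hj2 : Nat.find hex = j + 1 := by omega
        rw [← hj2]
        exact hk
  -- apply the countable additivity hypothesis
  have hs := hl l hC B hBm hBd (fun i => hmem _ (hBm i))
    (hmem _ (MeasurableSet.iUnion fun i => hBm i))
  have hterm : ∀ i, (⟨(B i).indicator fun _ => (1:ℝ),
      hmem _ (hBm i)⟩ : ↥(Hc Ω Pr)) = In i - In (i + 1) := by
    intro i
    apply Subtype.ext
    have hco : ((In i - In (i + 1) : ↥(Hc Ω Pr)) : Ω → ℝ)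
        = fun ω => (A i).indicator (fun _ => (1:ℝ)) ω
          - (A (i + 1)).indicator (fun _ => (1:ℝ)) ω := rfl
    rw [hco]
    funext ω
    by_cases h1 : ω ∈ A (i + 1)
    · have h2 : ω ∈ A i := hanti (Nat.le_succ i) h1
      have h3 : ω ∉ B i := fun hb => hb.2 h1
      simp [Set.indicator_of_mem, Set.indicator_of_notMem, h1, h2, h3]
    · by_cases h2 : ω ∈ A i
      · have h3 : ω ∈ B i := ⟨h2, h1⟩
        simp [Set.indicator_of_mem, Set.indicator_of_notMem, h1, h2, h3]
      · have h3 : ω ∉ B i := fun hb => h2 hb.1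
        simp [Set.indicator_of_notMem, h1, h2, h3]
  have hUeq : (⟨(⋃ i, B i).indicator fun _ => (1:ℝ),
      hmem _ (MeasurableSet.iUnion fun i => hBm i)⟩ : ↥(Hc Ω Pr)) = In 0 := by
    apply Subtype.ext
    show (⋃ i, B i).indicator _ = (A 0).indicator _
    rw [hBU]
  rw [hUeq, hl0] at hs
  have hz : (fun i => l (⟨(B i).indicator fun _ => (1:ℝ),
      hmem _ (hBm i)⟩ : ↥(Hc Ω Pr))) = fun _ => (0:ℝ) := by
    funext i
    rw [hterm i, map_sub, hlIn i, hlIn (i + 1), sub_self]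
  rw [hz] at hs
  have := hasSum_zero.unique hs
  linarith
end

section
/- Assume that for every decreasing sequence (A_n) ⊆ 𝔉 with ⋂_n A_n = ∅ one has sup_{P∈𝒫} P(A_n) → 0. Then there exists a countable subset 𝒫̃ ⊆ 𝒫 that is equivalent to 𝒫, i.e., for every A ∈ 𝔉: sup_{P∈𝒫̃} P(A) = 0 if and only if sup_{P∈𝒫} P(A) = 0; moreover there exists a single probability measure Q on (Ω, 𝔉) such that for every A ∈ 𝔉: Q(A) = 0 if and only if sup_{P∈𝒫} P(A) = 0. -/
open MeasureTheory Filter Topology Set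
open scoped ENNReal

namespace CountEquivAux

variable {Ω : Type*} [MeasurableSpace Ω]

noncomputable def capa (Pr : Set (Measure Ω)) (A : Set Ω) : ℝ≥0∞ := ⨆ P ∈ Pr, P A

def nullFor (L : List (Measure Ω)) (A : Set Ω) : Prop :=
  MeasurableSet A ∧ ∀ P ∈ L, P A = 0

noncomputable def alp (Pr : Set (Measure Ω)) (L : List (Measure Ω)) : ℝ≥0∞ :=
  ⨆ A ∈ {A : Set Ω | nullFor L A}, capa Pr A

lemma capa_le_one (Pr : Set (Measure Ω)) (hprob : ∀ P ∈ Pr, IsProbabilityMeasure P)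
    (A : Set Ω) : capa Pr A ≤ 1 := by
  refine iSup₂_le fun P hP => ?_
  haveI := hprob P hP
  exact (measure_mono (subset_univ A)).trans_eq measure_univ

lemma le_alp (Pr : Set (Measure Ω)) {L : List (Measure Ω)} {A : Set Ω}
    (h : nullFor L A) : capa Pr A ≤ alp Pr L :=
  le_iSup₂ (f := fun A (_ : A ∈ {A : Set Ω | nullFor L A}) => capa Pr A) A h

lemma exists_pick (Pr : Set (Measure Ω)) (hne : Pr.Nonempty)
    (hprob : ∀ P ∈ Pr, IsProbabilityMeasure P) (L : List (Measure Ω)) :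
    ∃ p : Measure Ω × Set Ω, p.1 ∈ Pr ∧ nullFor L p.2 ∧
      alp Pr L ≤ p.1 p.2 + ((L.length : ℝ≥0∞) + 1)⁻¹ := by
  set δ : ℝ≥0∞ := ((L.length : ℝ≥0∞) + 1)⁻¹ with hδ
  have hδ0 : δ ≠ 0 := by
    simp [hδ]
  by_cases h0 : alp Pr L = 0
  · obtain ⟨P, hP⟩ := hne
    exact ⟨(P, ∅), hP, ⟨MeasurableSet.empty, fun _ _ => measure_empty⟩, by simp [h0]⟩
  · have hfin : alp Pr L ≠ ∞ := by
      refine ((iSup₂_le fun A _ => capa_le_one Pr hprob A).trans_lt ?_).ne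
      exact ENNReal.one_lt_top
    have hlt : alp Pr L - δ < alp Pr L := ENNReal.sub_lt_self hfin h0 hδ0
    rw [alp, lt_iSup_iff] at hlt
    obtain ⟨A, hlt⟩ := hlt
    rw [lt_iSup_iff] at hlt
    obtain ⟨hA, hlt⟩ := hlt
    rw [capa, lt_iSup_iff] at hlt
    obtain ⟨P, hlt⟩ := hlt
    rw [lt_iSup_iff] at hlt
    obtain ⟨hP, hlt⟩ := hlt
    exact ⟨(P, A), hP, hA, tsub_le_iff_right.mp hlt.le⟩

noncomputable def pick (Pr : Set (Measure Ω)) (hne : Pr.Nonempty)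
    (hprob : ∀ P ∈ Pr, IsProbabilityMeasure P) (L : List (Measure Ω)) :
    Measure Ω × Set Ω :=
  (exists_pick Pr hne hprob L).choose

lemma pick_spec (Pr : Set (Measure Ω)) (hne : Pr.Nonempty)
    (hprob : ∀ P ∈ Pr, IsProbabilityMeasure P) (L : List (Measure Ω)) :
    (pick Pr hne hprob L).1 ∈ Pr ∧ nullFor L (pick Pr hne hprob L).2 ∧
      alp Pr L ≤ (pick Pr hne hprob L).1 (pick Pr hne hprob L).2
        + ((L.length : ℝ≥0∞) + 1)⁻¹ :=
  (exists_pick Pr hne hprob L).choose_spec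

noncomputable def seqL (Pr : Set (Measure Ω)) (hne : Pr.Nonempty)
    (hprob : ∀ P ∈ Pr, IsProbabilityMeasure P) : ℕ → List (Measure Ω)
  | 0 => []
  | n + 1 => seqL Pr hne hprob n ++ [(pick Pr hne hprob (seqL Pr hne hprob n)).1]

lemma length_seqL (Pr : Set (Measure Ω)) (hne : Pr.Nonempty)
    (hprob : ∀ P ∈ Pr, IsProbabilityMeasure P) :
    ∀ n, (seqL Pr hne hprob n).length = n
  | 0 => rfl
  | n + 1 => by simp [seqL, length_seqL Pr hne hprob n]

lemma mem_seqL (Pr : Set (Measure Ω)) (hne : Pr.Nonempty)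
    (hprob : ∀ P ∈ Pr, IsProbabilityMeasure P) (Q : Measure Ω) :
    ∀ n, Q ∈ seqL Pr hne hprob n ↔
      ∃ k < n, Q = (pick Pr hne hprob (seqL Pr hne hprob k)).1
  | 0 => by simp [seqL]
  | n + 1 => by
    rw [seqL, List.mem_append, List.mem_singleton, mem_seqL Pr hne hprob Q n]
    constructor
    · rintro (⟨k, hk, rfl⟩ | rfl)
      exacts [⟨k, hk.trans n.lt_succ_self, rfl⟩, ⟨n, n.lt_succ_self, rfl⟩]
    · rintro ⟨k, hk, rfl⟩
      rcases Nat.lt_succ_iff_lt_or_eq.mp hk with h | rfl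
      exacts [Or.inl ⟨k, h, rfl⟩, Or.inr rfl]

lemma key (Pr : Set (Measure Ω)) (hne : Pr.Nonempty)
    (hprob : ∀ P ∈ Pr, IsProbabilityMeasure P)
    (hZ : ∀ A : ℕ → Set Ω, (∀ n, MeasurableSet (A n)) → Antitone A → (⋂ n, A n) = ∅ →
      Tendsto (fun n => ⨆ P ∈ Pr, P (A n)) atTop (𝓝 0))
    (A : Set Ω) (hA : MeasurableSet A)
    (hA0 : ∀ n, (pick Pr hne hprob (seqL Pr hne hprob n)).1 A = 0) :
    ∀ P ∈ Pr, P A = 0 := by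
  intro P hP
  set Pn : ℕ → Measure Ω := fun n => (pick Pr hne hprob (seqL Pr hne hprob n)).1 with hPn
  set An : ℕ → Set Ω := fun n => (pick Pr hne hprob (seqL Pr hne hprob n)).2 with hAn
  have hPmem : ∀ n, Pn n ∈ Pr := fun n => (pick_spec Pr hne hprob _).1
  have hAnull : ∀ n, nullFor (seqL Pr hne hprob n) (An n) :=
    fun n => (pick_spec Pr hne hprob _).2.1
  have hAmeas : ∀ n, MeasurableSet (An n) := fun n => (hAnull n).1
  have hAprev : ∀ {j k : ℕ}, j < k → Pn j (An k) = 0 := by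
    intro j k hjk
    exact (hAnull k).2 (Pn j) ((mem_seqL Pr hne hprob _ k).mpr ⟨j, hjk, rfl⟩)
  have halp : ∀ n, alp Pr (seqL Pr hne hprob n) ≤ Pn n (An n) + ((n : ℝ≥0∞) + 1)⁻¹ := by
    intro n
    have := (pick_spec Pr hne hprob (seqL Pr hne hprob n)).2.2
    rwa [length_seqL] at this
  -- the decreasing sets
  set C : ℕ → Set Ω := fun n => A ∪ ⋃ k, ⋃ (_ : n ≤ k), An k with hC
  have hCmeas : ∀ n, MeasurableSet (C n) :=
    fun n => hA.union (MeasurableSet.iUnion fun k => MeasurableSet.iUnion fun _ => hAmeas k)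
  have hCanti : Antitone C := by
    intro m n hmn
    refine union_subset subset_union_left (subset_union_of_subset_right ?_ _)
    exact iUnion₂_mono' fun k hk => ⟨k, hmn.trans hk, subset_rfl⟩
  set Ci : Set Ω := ⋂ n, C n with hCi
  set D : ℕ → Set Ω := fun n => C n \ Ci with hD
  have hDmeas : ∀ n, MeasurableSet (D n) :=
    fun n => (hCmeas n).diff (MeasurableSet.iInter hCmeas)
  have hDanti : Antitone D := fun m n h => diff_subset_diff_left (hCanti h)
  have hDempty : (⋂ n, D n) = ∅ := by
    rw [eq_empty_iff_forall_notMem]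
    intro x hx
    exact (mem_iInter.mp hx 0).2 (mem_iInter.mpr fun n => (mem_iInter.mp hx n).1)
  have hsup : Tendsto (fun n => ⨆ P ∈ Pr, P (D n)) atTop (𝓝 0) :=
    hZ D hDmeas hDanti hDempty
  -- Pn n Ci = 0
  have hCi0 : ∀ n, Pn n Ci = 0 := by
    intro n
    refine measure_mono_null (iInter_subset C (n + 1)) ?_
    refine measure_union_null (hA0 n) ?_
    exact measure_iUnion_null fun k => measure_iUnion_null fun hk =>
      hAprev (Nat.lt_of_succ_le hk)
  -- chain of inequalities
  have hbound : ∀ n, P A ≤ (⨆ P ∈ Pr, P (D n)) + ((n : ℝ≥0∞) + 1)⁻¹ := by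
    intro n
    have h1 : P A ≤ capa Pr A :=
      le_iSup₂ (f := fun P (_ : P ∈ Pr) => P A) P hP
    have h2 : capa Pr A ≤ alp Pr (seqL Pr hne hprob n) := by
      refine le_alp Pr ⟨hA, fun P' hP' => ?_⟩
      obtain ⟨k, -, rfl⟩ := (mem_seqL Pr hne hprob P' n).mp hP'
      exact hA0 k
    have h3 : Pn n (An n) ≤ ⨆ P ∈ Pr, P (D n) := by
      have hsub : An n ⊆ D n ∪ Ci := by
        have h4 : An n ⊆ C n :=
          (subset_iUnion₂ (s := fun k (_ : n ≤ k) => An k) n le_rfl).trans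
            subset_union_right
        exact h4.trans (subset_diff_union _ _)
      calc Pn n (An n) ≤ Pn n (D n) + Pn n Ci :=
            (measure_mono hsub).trans (measure_union_le _ _)
        _ = Pn n (D n) := by rw [hCi0 n, add_zero]
        _ ≤ ⨆ P ∈ Pr, P (D n) :=
            le_iSup₂ (f := fun P (_ : P ∈ Pr) => P (D n)) (Pn n) (hPmem n)
    calc P A ≤ Pn n (An n) + ((n : ℝ≥0∞) + 1)⁻¹ := h1.trans ((h2.trans (halp n)))
      _ ≤ (⨆ P ∈ Pr, P (D n)) + ((n : ℝ≥0∞) + 1)⁻¹ := add_le_add_left h3 _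
  have hinv : Tendsto (fun n : ℕ => ((n : ℝ≥0∞) + 1)⁻¹) atTop (𝓝 0) := by
    have := ENNReal.tendsto_inv_nat_nhds_zero.comp (tendsto_add_atTop_nat 1)
    have h2 : ∀ a : ℕ, ((a + 1 : ℕ) : ℝ≥0∞)⁻¹ = ((a : ℝ≥0∞) + 1)⁻¹ := by
      intro a; push_cast; ring_nf
    simpa [Function.comp_def, h2] using this
  have hg : Tendsto (fun n => (⨆ P ∈ Pr, P (D n)) + ((n : ℝ≥0∞) + 1)⁻¹) atTop (𝓝 0) := by
    simpa using hsup.add hinv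
  exact le_zero_iff.mp (ge_of_tendsto' hg hbound)


end CountEquivAux

/-- If the capacity `c = sup_{P ∈ Pr} P` is continuous along decreasing sequences of
measurable sets with empty intersection, then there is a countable subclass `Pr' ⊆ Pr`
equivalent to `Pr`, and moreover a single probability measure `Q` whose null sets are
exactly the `Pr`-polar sets. -/
theorem countable_equivalent_subclass_of_capacity_continuous
    {Ω : Type*} [MeasurableSpace Ω] (Pr : Set (Measure Ω))
    (hne : Pr.Nonempty) (hprob : ∀ P ∈ Pr, IsProbabilityMeasure P)
    (hZ : ∀ A : ℕ → Set Ω, (∀ n, MeasurableSet (A n)) → Antitone A → (⋂ n, A n) = ∅ →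
      Tendsto (fun n => ⨆ P ∈ Pr, P (A n)) atTop (𝓝 0)) :
    (∃ Pr' : Set (Measure Ω), Pr' ⊆ Pr ∧ Pr'.Countable ∧
      ∀ A : Set Ω, MeasurableSet A → ((∀ P ∈ Pr', P A = 0) ↔ ∀ P ∈ Pr, P A = 0)) ∧
    (∃ Q : Measure Ω, IsProbabilityMeasure Q ∧
      ∀ A : Set Ω, MeasurableSet A → (Q A = 0 ↔ ∀ P ∈ Pr, P A = 0)) := by
  classical
  set Pn : ℕ → Measure Ω :=
    fun n => (CountEquivAux.pick Pr hne hprob (CountEquivAux.seqL Pr hne hprob n)).1 with hPn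
  have hPmem : ∀ n, Pn n ∈ Pr := fun n => (CountEquivAux.pick_spec Pr hne hprob _).1
  have hkey : ∀ A : Set Ω, MeasurableSet A → (∀ n, Pn n A = 0) → ∀ P ∈ Pr, P A = 0 :=
    fun A hA h => CountEquivAux.key Pr hne hprob hZ A hA h
  constructor
  · refine ⟨Set.range Pn, ?_, countable_range Pn, fun A hA => ?_⟩
    · rintro _ ⟨n, rfl⟩; exact hPmem n
    · constructor
      · intro h
        exact hkey A hA fun n => h (Pn n) ⟨n, rfl⟩
      · rintro h _ ⟨n, rfl⟩
        exact h _ (hPmem n)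
  · have hw : ∀ k : ℕ, ((2 : ℝ≥0∞)⁻¹ ^ (k + 1)) ≠ 0 := by
      intro k
      simp
    have hgeom : ∑' k : ℕ, (2 : ℝ≥0∞)⁻¹ ^ (k + 1) = 1 := by
      have h1 : (fun k : ℕ => (2 : ℝ≥0∞)⁻¹ ^ (k + 1))
          = fun k : ℕ => (2 : ℝ≥0∞)⁻¹ ^ k * 2⁻¹ := funext fun k => pow_succ _ _
      rw [h1, ENNReal.tsum_mul_right, ENNReal.tsum_geometric, ENNReal.one_sub_inv_two,
        inv_inv]
      exact ENNReal.mul_inv_cancel two_ne_zero ENNReal.ofNat_ne_top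
    refine ⟨Measure.sum fun k => ((2 : ℝ≥0∞)⁻¹ ^ (k + 1)) • Pn k, ⟨?_⟩, fun A hA => ?_⟩
    · rw [Measure.sum_apply _ MeasurableSet.univ]
      have h2 : ∀ k : ℕ, (((2 : ℝ≥0∞)⁻¹ ^ (k + 1)) • Pn k) univ
          = (2 : ℝ≥0∞)⁻¹ ^ (k + 1) := by
        intro k
        haveI := hprob (Pn k) (hPmem k)
        simp
      rw [tsum_congr h2, hgeom]
    · rw [Measure.sum_apply _ hA, ENNReal.tsum_eq_zero]
      have h3 : ∀ k : ℕ, (((2 : ℝ≥0∞)⁻¹ ^ (k + 1)) • Pn k) A = 0 ↔ Pn k A = 0 := by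
        intro k
        simp [Measure.smul_apply, smul_eq_mul, hw k]
      constructor
      · intro h
        exact hkey A hA fun n => (h3 n).mp (h n)
      · intro h k
        exact (h3 k).mpr (h (Pn k) (hPmem k))
end

section
/- Assume that for every decreasing sequence (A_n) ⊆ 𝔉 with ⋂_n A_n = ∅ one has sup_{P∈𝒫} P(A_n) → 0. Then for each ε > 0 there exist finitely many P_1, …, P_n ∈ 𝒫 and δ > 0 such that for every A ∈ 𝔉: if P_i(A) < δ for all i = 1, …, n, then P(A) < ε for all P ∈ 𝒫. -/
open MeasureTheory Filter Topology Set
open scoped ENNReal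

section Aux

variable {Ω : Type*} [MeasurableSpace Ω] (Pr : Set (Measure Ω)) (ε : ℝ≥0∞)
  (P0 : Measure Ω) (hP0 : P0 ∈ Pr)
  (hcon : ∀ (n : ℕ) (Ps : Fin n → Measure Ω) (δ : ℝ≥0∞), (∀ i, Ps i ∈ Pr) → 0 < δ →
      ∃ A, MeasurableSet A ∧ (∀ i, Ps i A < δ) ∧ ∃ Q ∈ Pr, ε ≤ Q A)

include hcon

lemma stepEx (n : ℕ) (s : {Ps : Fin (n+1) → Measure Ω // ∀ i, Ps i ∈ Pr}) :
    ∃ A, MeasurableSet A ∧ (∀ i, s.1 i A < (2⁻¹ : ℝ≥0∞)^n) ∧ ∃ Q ∈ Pr, ε ≤ Q A :=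
  hcon (n+1) s.1 _ s.2 (ENNReal.pow_pos (by norm_num) n)

noncomputable def theA (n : ℕ) (s : {Ps : Fin (n+1) → Measure Ω // ∀ i, Ps i ∈ Pr}) : Set Ω :=
  (stepEx Pr ε hcon n s).choose

noncomputable def theQ (n : ℕ) (s : {Ps : Fin (n+1) → Measure Ω // ∀ i, Ps i ∈ Pr}) : Measure Ω :=
  (stepEx Pr ε hcon n s).choose_spec.2.2.choose

lemma theQ_mem (n : ℕ) (s : {Ps : Fin (n+1) → Measure Ω // ∀ i, Ps i ∈ Pr}) :
    theQ Pr ε hcon n s ∈ Pr :=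
  (stepEx Pr ε hcon n s).choose_spec.2.2.choose_spec.1

lemma theQ_ge (n : ℕ) (s : {Ps : Fin (n+1) → Measure Ω // ∀ i, Ps i ∈ Pr}) :
    ε ≤ theQ Pr ε hcon n s (theA Pr ε hcon n s) :=
  (stepEx Pr ε hcon n s).choose_spec.2.2.choose_spec.2

lemma theA_meas (n : ℕ) (s : {Ps : Fin (n+1) → Measure Ω // ∀ i, Ps i ∈ Pr}) :
    MeasurableSet (theA Pr ε hcon n s) :=
  (stepEx Pr ε hcon n s).choose_spec.1

lemma theA_small (n : ℕ) (s : {Ps : Fin (n+1) → Measure Ω // ∀ i, Ps i ∈ Pr}) (i : Fin (n+1)) :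
    s.1 i (theA Pr ε hcon n s) < (2⁻¹ : ℝ≥0∞)^n :=
  (stepEx Pr ε hcon n s).choose_spec.2.1 i

noncomputable def state : (n : ℕ) → {Ps : Fin (n+1) → Measure Ω // ∀ i, Ps i ∈ Pr}
  | 0 => ⟨fun _ => P0, fun _ => hP0⟩
  | (n+1) =>
    ⟨Fin.snoc (state n).1 (theQ Pr ε hcon n (state n)), by
      intro i
      refine Fin.lastCases ?_ (fun j => ?_) i
      · simpa using theQ_mem Pr ε hcon n (state n)
      · simpa using (state n).2 j⟩

lemma state_compat (n : ℕ) (i : Fin (n+1)) :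
    (state Pr ε P0 hP0 hcon (n+1)).1 i.castSucc = (state Pr ε P0 hP0 hcon n).1 i := by
  simp [state]

noncomputable def seqP (n : ℕ) : Measure Ω := (state Pr ε P0 hP0 hcon n).1 (Fin.last n)

noncomputable def seqA (n : ℕ) : Set Ω := theA Pr ε hcon n (state Pr ε P0 hP0 hcon n)

lemma state_eq_seqP : ∀ (n : ℕ) (i : Fin (n+1)),
    (state Pr ε P0 hP0 hcon n).1 i = seqP Pr ε P0 hP0 hcon i.1 := by
  intro n
  induction n with
  | zero => intro i; rw [Fin.eq_zero i]; rfl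
  | succ n ih =>
    intro i
    refine Fin.lastCases ?_ (fun j => ?_) i
    · rfl
    · rw [state_compat, ih j]
      rfl

lemma seqP_mem (n : ℕ) : seqP Pr ε P0 hP0 hcon n ∈ Pr := (state Pr ε P0 hP0 hcon n).2 _

lemma seqA_meas (n : ℕ) : MeasurableSet (seqA Pr ε P0 hP0 hcon n) := theA_meas Pr ε hcon n _

lemma seqP_seqA_small (n i : ℕ) (h : i ≤ n) :
    seqP Pr ε P0 hP0 hcon i (seqA Pr ε P0 hP0 hcon n) < (2⁻¹ : ℝ≥0∞)^n := by
  have := theA_small Pr ε hcon n (state Pr ε P0 hP0 hcon n) ⟨i, Nat.lt_succ_of_le h⟩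
  rwa [state_eq_seqP] at this

lemma seqP_seqA_ge (n : ℕ) :
    ε ≤ seqP Pr ε P0 hP0 hcon (n+1) (seqA Pr ε P0 hP0 hcon n) := by
  have h := theQ_ge Pr ε hcon n (state Pr ε P0 hP0 hcon n)
  have : seqP Pr ε P0 hP0 hcon (n+1) = theQ Pr ε hcon n (state Pr ε P0 hP0 hcon n) := by
    show (state Pr ε P0 hP0 hcon (n+1)).1 (Fin.last (n+1)) = _
    simp [state]
  rwa [this]

end Aux

/-- If the capacity `c = sup_{P ∈ Pr} P` is continuous along decreasing sequences of
measurable sets with empty intersection, then for every `ε > 0` there are finitely many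
`P_1, …, P_n ∈ Pr` and `δ > 0` such that any measurable set `A` with `P_i(A) < δ` for all
`i` satisfies `P(A) < ε` for all `P ∈ Pr`. -/
theorem finitely_many_measures_control_capacity
    {Ω : Type*} [MeasurableSpace Ω] (Pr : Set (Measure Ω))
    (hne : Pr.Nonempty) (hprob : ∀ P ∈ Pr, IsProbabilityMeasure P)
    (hZ : ∀ A : ℕ → Set Ω, (∀ n, MeasurableSet (A n)) → Antitone A → (⋂ n, A n) = ∅ →
      Tendsto (fun n => ⨆ P ∈ Pr, P (A n)) atTop (𝓝 0)) :
    ∀ ε : ℝ≥0∞, 0 < ε →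
      ∃ (n : ℕ) (Ps : Fin n → Measure Ω) (δ : ℝ≥0∞),
        (∀ i, Ps i ∈ Pr) ∧ 0 < δ ∧
        ∀ A : Set Ω, MeasurableSet A → (∀ i, Ps i A < δ) → ∀ P ∈ Pr, P A < ε := by
  intro ε hε
  by_contra hcontr
  push_neg at hcontr
  set ε' : ℝ≥0∞ := min ε 1 with hε'def
  have hε' : 0 < ε' := lt_min hε one_pos
  have hε'top : ε' ≠ ∞ := ne_top_of_le_ne_top ENNReal.one_ne_top (min_le_right _ _)
  have hcon : ∀ (n : ℕ) (Ps : Fin n → Measure Ω) (δ : ℝ≥0∞), (∀ i, Ps i ∈ Pr) → 0 < δ →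
      ∃ A, MeasurableSet A ∧ (∀ i, Ps i A < δ) ∧ ∃ Q ∈ Pr, ε' ≤ Q A := by
    intro n Ps δ hPs hδ
    obtain ⟨A, hAm, hAs, Q, hQ, hQA⟩ := hcontr n Ps δ hPs hδ
    exact ⟨A, hAm, hAs, Q, hQ, le_trans (min_le_left _ _) hQA⟩
  obtain ⟨P0, hP0⟩ := hne
  set P : ℕ → Measure Ω := seqP Pr ε' P0 hP0 hcon with hP
  set A : ℕ → Set Ω := seqA Pr ε' P0 hP0 hcon with hA
  have hPmem : ∀ n, P n ∈ Pr := seqP_mem Pr ε' P0 hP0 hcon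
  have hAmeas : ∀ n, MeasurableSet (A n) := seqA_meas Pr ε' P0 hP0 hcon
  have hPA : ∀ n i, i ≤ n → P i (A n) < (2⁻¹ : ℝ≥0∞)^n := seqP_seqA_small Pr ε' P0 hP0 hcon
  have hQA : ∀ n, ε' ≤ P (n+1) (A n) := seqP_seqA_ge Pr ε' P0 hP0 hcon
  -- the decreasing sequence of tails
  set B : ℕ → Set Ω := fun n => ⋃ k, A (n + k) with hB
  have hBmeas : ∀ n, MeasurableSet (B n) := fun n => MeasurableSet.iUnion fun k => hAmeas _
  have hBanti : Antitone B := by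
    refine antitone_nat_of_succ_le fun n => ?_
    refine iUnion_subset fun k => ?_
    have : n + 1 + k = n + (k + 1) := by ring
    rw [this]
    exact subset_iUnion (fun k => A (n + k)) (k + 1)
  have hAB : ∀ n, A n ⊆ B n := fun n => by
    simpa using subset_iUnion (fun k => A (n + k)) 0
  set Binf : Set Ω := ⋂ j, B j with hBinf
  set C : ℕ → Set Ω := fun n => B n \ Binf with hC
  have hCmeas : ∀ n, MeasurableSet (C n) :=
    fun n => (hBmeas n).diff (MeasurableSet.iInter fun j => hBmeas j)
  have hCanti : Antitone C := fun m n hmn => diff_subset_diff_left (hBanti hmn)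
  have hCempty : (⋂ n, C n) = ∅ := by
    refine eq_empty_iff_forall_notMem.2 fun x hx => ?_
    rw [mem_iInter] at hx
    exact (hx 0).2 (mem_iInter.2 fun j => (hx j).1)
  -- bound on tails
  have hPB : ∀ n m, n ≤ m → P n (B m) ≤ 2 * (2⁻¹ : ℝ≥0∞)^m := by
    intro n m hnm
    calc P n (B m) ≤ ∑' k, P n (A (m + k)) := measure_iUnion_le _
    _ ≤ ∑' k : ℕ, (2⁻¹ : ℝ≥0∞)^(m + k) := by
        refine ENNReal.tsum_le_tsum fun k => ?_
        exact (hPA (m + k) n (le_trans hnm (Nat.le_add_right m k))).le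
    _ = (2⁻¹ : ℝ≥0∞)^m * ∑' k : ℕ, (2⁻¹ : ℝ≥0∞)^k := by
        rw [← ENNReal.tsum_mul_left]
        simp [pow_add]
    _ = (2⁻¹ : ℝ≥0∞)^m * 2 := by
        rw [ENNReal.tsum_geometric]
        norm_num
    _ = 2 * (2⁻¹ : ℝ≥0∞)^m := by ring
  have hPBinf : ∀ n, P (n+1) Binf ≤ (2⁻¹ : ℝ≥0∞)^n := by
    intro n
    calc P (n+1) Binf ≤ P (n+1) (B (n+1)) := measure_mono (iInter_subset _ _)
    _ ≤ 2 * (2⁻¹ : ℝ≥0∞)^(n+1) := hPB (n+1) (n+1) le_rfl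
    _ = (2⁻¹ : ℝ≥0∞)^n := by
        rw [pow_succ, mul_comm (2:ℝ≥0∞), mul_assoc,
          ENNReal.inv_mul_cancel (by norm_num) (by norm_num), mul_one]
  have hPC : ∀ n, ε' ≤ P (n+1) (C n) + (2⁻¹ : ℝ≥0∞)^n := by
    intro n
    calc ε' ≤ P (n+1) (A n) := hQA n
    _ ≤ P (n+1) (C n ∪ Binf) := by
        refine measure_mono ?_
        intro x hx
        by_cases hxB : x ∈ Binf
        · exact Or.inr hxB
        · exact Or.inl ⟨hAB n hx, hxB⟩
    _ ≤ P (n+1) (C n) + P (n+1) Binf := measure_union_le _ _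
    _ ≤ P (n+1) (C n) + (2⁻¹ : ℝ≥0∞)^n := add_le_add_right (hPBinf n) _
  -- apply hZ
  have htend := hZ C hCmeas hCanti hCempty
  have h1 : ∀ᶠ n in atTop, (⨆ Q ∈ Pr, Q (C n)) < ε' / 2 :=
    (tendsto_order.1 htend).2 (ε' / 2) (ENNReal.half_pos hε'.ne')
  have h2 : ∀ᶠ n in atTop, (2⁻¹ : ℝ≥0∞)^n < ε' / 2 := by
    obtain ⟨m, hm⟩ := ENNReal.exists_inv_two_pow_lt (ENNReal.half_pos hε'.ne').ne'
    filter_upwards [eventually_ge_atTop m] with n hn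
    calc (2⁻¹ : ℝ≥0∞)^n ≤ (2⁻¹ : ℝ≥0∞)^m :=
      pow_le_pow_right_of_le_one' (by norm_num) hn
    _ < ε' / 2 := by simpa using hm
  obtain ⟨n, hn1, hn2⟩ := (h1.and h2).exists
  have hsup : P (n+1) (C n) ≤ ⨆ Q ∈ Pr, Q (C n) :=
    le_biSup (fun Q => Q (C n)) (hPmem (n+1))
  have : ε' < ε' := by
    calc ε' ≤ P (n+1) (C n) + (2⁻¹ : ℝ≥0∞)^n := hPC n
    _ ≤ (⨆ Q ∈ Pr, Q (C n)) + (2⁻¹ : ℝ≥0∞)^n := add_le_add_left hsup _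
    _ < ε' / 2 + ε' / 2 := ENNReal.add_lt_add hn1 hn2
    _ = ε' := ENNReal.add_halves ε'
  exact lt_irrefl _ this
end

section
/- Let B be a normed vector lattice over ℝ (a normed space with a lattice order compatible with the vector space structure such that |x| ≤ |y| implies ‖x‖ ≤ ‖y‖). Let (x_n) ⊆ B satisfy 0 ≤ x_{n+1} ≤ x_n for all n, and suppose that l(x_n) → 0 for every continuous linear functional l on B. Then ‖x_n‖ → 0. -/
open Filter Topology

private lemma dyadic_smul_nonneg {B : Type*} [NormedAddCommGroup B] [Lattice B] [HasSolidNorm B] [IsOrderedAddMonoid B] [NormedSpace ℝ B]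
    {v : B} (hv : 0 ≤ v) (k m : ℕ) : 0 ≤ ((k : ℝ) / 2 ^ m) • v := by
  induction m with
  | zero =>
    simpa [Nat.cast_smul_eq_nsmul] using nsmul_nonneg hv k
  | succ m ih =>
    apply nsmul_two_semiclosed
    have h2 : (2 : ℕ) • (((k : ℝ) / 2 ^ (m + 1)) • v) = ((k : ℝ) / 2 ^ m) • v := by
      rw [two_nsmul, ← two_smul ℝ, smul_smul]
      congr 1
      field_simp
      ring
    rw [h2]
    exact ih

private lemma real_smul_nonneg {B : Type*} [NormedAddCommGroup B] [Lattice B] [HasSolidNorm B] [IsOrderedAddMonoid B] [NormedSpace ℝ B]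
    {a : ℝ} (ha : 0 ≤ a) {v : B} (hv : 0 ≤ v) : 0 ≤ a • v := by
  set q : ℕ → ℝ := fun n => (⌈a * 2 ^ n⌉₊ : ℝ) / 2 ^ n with hq
  have hq_ge : ∀ n, a ≤ q n := by
    intro n
    rw [hq, le_div_iff₀ (by positivity)]
    exact Nat.le_ceil _
  have hq_lt : ∀ n, q n ≤ a + (1 / 2) ^ n := by
    intro n
    rw [hq, div_le_iff₀ (by positivity)]
    have := (Nat.ceil_lt_add_one (by positivity : (0:ℝ) ≤ a * 2 ^ n)).le
    calc (⌈a * 2 ^ n⌉₊ : ℝ) ≤ a * 2 ^ n + 1 := this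
      _ = (a + (1/2) ^ n) * 2 ^ n := by
          field_simp
          rw [mul_add, ← mul_pow, one_div, mul_inv_cancel₀ (two_ne_zero : (2:ℝ) ≠ 0), one_pow]
          ring
  have hqa : Tendsto q atTop (𝓝 a) := by
    have h1 : Tendsto (fun n : ℕ => a + (1 / 2 : ℝ) ^ n) atTop (𝓝 (a + 0)) :=
      tendsto_const_nhds.add (tendsto_pow_atTop_nhds_zero_of_lt_one (by norm_num) (by norm_num))
    rw [add_zero] at h1
    exact tendsto_of_tendsto_of_tendsto_of_le_of_le tendsto_const_nhds h1 hq_ge hq_lt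
  have hlim : Tendsto (fun n => q n • v) atTop (𝓝 (a • v)) := hqa.smul_const v
  exact isClosed_nonneg.mem_of_tendsto hlim
    (Eventually.of_forall fun n => dyadic_smul_nonneg hv _ n)

/-- In a normed vector lattice `B` over `ℝ`, if `(x_n)` is a nonincreasing sequence of
nonnegative elements converging weakly to `0` (i.e. `l(x_n) → 0` for every continuous
linear functional `l`), then `‖x_n‖ → 0`. -/
theorem norm_tendsto_zero_of_weak_tendsto_zero
    {B : Type*} [NormedAddCommGroup B] [Lattice B] [HasSolidNorm B] [IsOrderedAddMonoid B] [NormedSpace ℝ B]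
    (x : ℕ → B) (hpos : ∀ n, 0 ≤ x n) (hdec : ∀ n, x (n + 1) ≤ x n)
    (hweak : ∀ l : B →L[ℝ] ℝ, Tendsto (fun n => l (x n)) atTop (𝓝 0)) :
    Tendsto (fun n => ‖x n‖) atTop (𝓝 0) := by
  have hxanti : Antitone x := antitone_nat_of_succ_le hdec
  -- norms are antitone
  have hnorm_anti : Antitone fun n => ‖x n‖ := by
    intro m n hmn
    exact norm_le_norm_of_abs_le_abs
      (by rw [abs_of_nonneg (hpos n), abs_of_nonneg (hpos m)]; exact hxanti hmn)
  have hbdd : BddBelow (Set.range fun n => ‖x n‖) :=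
    ⟨0, by rintro _ ⟨n, rfl⟩; exact norm_nonneg _⟩
  set L := ⨅ n, ‖x n‖ with hL
  have htend : Tendsto (fun n => ‖x n‖) atTop (𝓝 L) := tendsto_atTop_ciInf hnorm_anti hbdd
  have hL0 : 0 ≤ L := le_ciInf fun n => norm_nonneg _
  rcases eq_or_lt_of_le hL0 with h | hLpos
  · rwa [← h] at htend
  · exfalso
    have hLle : ∀ n, L ≤ ‖x n‖ := fun n => ciInf_le hbdd n
    -- every element of the convex hull dominates some `x M`
    have hhull : ∀ y ∈ convexHull ℝ (Set.range x), ∃ M, x M ≤ y := by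
      have : convexHull ℝ (Set.range x) ⊆ {y | ∃ M, x M ≤ y} := by
        apply convexHull_min
        · rintro _ ⟨n, rfl⟩; exact ⟨n, le_rfl⟩
        · rintro y ⟨M, hM⟩ y' ⟨M', hM'⟩ a b ha hb hab
          refine ⟨max M M', ?_⟩
          have h1 : x (max M M') ≤ y := (hxanti (le_max_left M M')).trans hM
          have h2 : x (max M M') ≤ y' := (hxanti (le_max_right M M')).trans hM'
          calc x (max M M') = a • x (max M M') + b • x (max M M') := by
                rw [← add_smul, hab, one_smul]
            _ ≤ a • y + b • y' := by
                apply add_le_add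
                · have := real_smul_nonneg ha (sub_nonneg.mpr h1)
                  rwa [smul_sub, sub_nonneg] at this
                · have := real_smul_nonneg hb (sub_nonneg.mpr h2)
                  rwa [smul_sub, sub_nonneg] at this
      exact fun y hy => this hy
    -- `L ≤ ‖y‖` on the closure of the convex hull
    set C := closure (convexHull ℝ (Set.range x)) with hC
    have hCnorm : ∀ y ∈ C, L ≤ ‖y‖ := by
      intro y hy
      have hclosed : IsClosed {y : B | L ≤ ‖y‖} := isClosed_le continuous_const continuous_norm
      refine closure_minimal ?_ hclosed hy
      intro z hz
      obtain ⟨M, hM⟩ := hhull z hz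
      have : ‖x M‖ ≤ ‖z‖ := norm_le_norm_of_abs_le_abs
        (by rw [abs_of_nonneg (hpos M), abs_of_nonneg ((hpos M).trans hM)]; exact hM)
      exact (hLle M).trans this
    have h0C : (0 : B) ∉ C := by
      intro h0
      have := hCnorm 0 h0
      rw [norm_zero] at this
      exact absurd this (not_le.mpr hLpos)
    obtain ⟨f, u, hfu, hf⟩ := geometric_hahn_banach_point_closed
      ((convex_convexHull ℝ _).closure) isClosed_closure h0C
    rw [map_zero] at hfu
    have hxC : ∀ n, x n ∈ C := fun n =>
      subset_closure (subset_convexHull ℝ _ (Set.mem_range_self n))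
    have hflarge : ∀ n, u < f (x n) := fun n => hf _ (hxC n)
    have := (hweak f).eventually (eventually_lt_nhds hfu)
    obtain ⟨n, hn⟩ := this.exists
    exact absurd (hflarge n) (not_lt.mpr hn.le)
end

section
/- Assume the continuum hypothesis. Let I be a set whose cardinality equals that of the continuum, and let μ be a probability measure on the measurable space (I, 𝔓(I)), where 𝔓(I) is the power set σ-algebra. Then there exists a countable set S ⊆ I with μ(I ∖ S) = 0; consequently μ(A) = Σ_{ω ∈ S ∩ A} μ({ω}) for every A ⊆ I, i.e., μ is a countable weighted sum of Dirac measures. -/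
open MeasureTheory Set
open scoped ENNReal

universe u v

lemma CH_transfer (h : (Cardinal.aleph 1 : Cardinal.{v}) = Cardinal.continuum) :
    (Cardinal.aleph 1 : Cardinal.{u}) = Cardinal.continuum := by
  apply Cardinal.lift_injective.{v}
  rw [Cardinal.lift_aleph, Cardinal.lift_continuum, Ordinal.lift_one]
  have h2 := congrArg Cardinal.lift.{u} h
  rwa [Cardinal.lift_aleph, Cardinal.lift_continuum, Ordinal.lift_one] at h2

/-- Ulam's theorem: a finite measure defined on all subsets of a set of cardinality `ℵ₁`
which vanishes on singletons vanishes identically. -/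
lemma ulam_aux {I : Type*} [MeasurableSpace I] (htop : ∀ A : Set I, MeasurableSet A)
    (hI : Cardinal.mk I = Cardinal.aleph 1) (ν : Measure I) [IsFiniteMeasure ν]
    (hsing : ∀ ω : I, ν {ω} = 0) : ν Set.univ = 0 := by
  classical
  by_contra hν
  -- null sets from countability
  have hnull : ∀ s : Set I, s.Countable → ν s = 0 := by
    intro s hs
    have : ν (⋃ i ∈ s, {i}) = 0 := by
      rw [measure_biUnion_null_iff hs]
      exact fun i _ => hsing i
    simpa [Set.biUnion_of_singleton] using this
  -- transfer the canonical well-order of `ℵ₁` to `I`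
  have hmkW : Cardinal.mk ((Cardinal.aleph 1).ord.ToType) = Cardinal.aleph 1 := by
    rw [Cardinal.mk_toType, Cardinal.card_ord]
  obtain ⟨e⟩ : Nonempty (I ≃ (Cardinal.aleph 1).ord.ToType) := by
    rw [← Cardinal.eq, hI, hmkW]
  -- each initial segment is countable
  have hpred : ∀ β : I, {α : I | e α < e β}.Countable := by
    intro β
    have h1 : (Set.Iio (e β)).Countable := by
      rw [Cardinal.countable_iff_lt_aleph_one]
      exact Cardinal.mk_Iio_ord_toType (e β)
    have : {α : I | e α < e β} = e ⁻¹' (Set.Iio (e β)) := rfl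
    rw [this]
    exact h1.preimage e.injective
  -- choose injections into ℕ
  have hinj : ∀ β : I, ∃ f : {α : I | e α < e β} → ℕ, Function.Injective f := by
    intro β
    exact Set.countable_iff_exists_injective.mp (hpred β)
  choose f hf using hinj
  -- the Ulam matrix
  set A : ℕ → I → Set I := fun n α => {β | ∃ h : e α < e β, f β ⟨α, h⟩ = n} with hA
  -- each row union has positive measure
  have hrow : ∀ α : I, ∃ n : ℕ, ν (A n α) ≠ 0 := by
    intro α
    by_contra hcon
    push_neg at hcon
    have hU : ν (⋃ n, A n α) = 0 := measure_iUnion_null (μ := ν) hcon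
    have hIic : ν {β : I | e β ≤ e α} = 0 := by
      apply hnull
      have : {β : I | e β ≤ e α} ⊆ insert α {β : I | e β < e α} := by
        intro β hβ
        rcases lt_or_eq_of_le (show e β ≤ e α from hβ) with h | h
        · exact Or.inr h
        · exact Or.inl (e.injective h)
      exact ((hpred α).insert α).mono this
    have hcover : (Set.univ : Set I) ⊆ {β : I | e β ≤ e α} ∪ ⋃ n, A n α := by
      intro β _
      rcases le_or_gt (e β) (e α) with h | h
      · exact Or.inl h
      · exact Or.inr (Set.mem_iUnion.mpr ⟨f β ⟨α, h⟩, ⟨h, rfl⟩⟩)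
    have : ν Set.univ = 0 := by
      have := (measure_mono (μ := ν) hcover).trans (measure_union_le _ _)
      rw [hIic, hU] at this
      simpa using this
    exact hν this
  choose g hg using hrow
  -- some fiber of g is uncountable
  have hfiber : ∃ n : ℕ, ¬ (g ⁻¹' {n}).Countable := by
    by_contra hcon
    push_neg at hcon
    have : (Set.univ : Set I).Countable := by
      have : (Set.univ : Set I) = ⋃ n : ℕ, g ⁻¹' {n} := by
        ext α; simp
      rw [this]
      exact Set.countable_iUnion hcon
    have hc : Countable I := Set.countable_univ_iff.mp this
    have : Cardinal.mk I ≤ Cardinal.aleph0 := Cardinal.mk_le_aleph0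
    rw [hI] at this
    exact absurd this (not_le.mpr Cardinal.aleph0_lt_aleph_one)
  obtain ⟨n, hT⟩ := hfiber
  set T : Set I := g ⁻¹' {n} with hTdef
  -- the sets A n α, α ∈ T, are pairwise disjoint with positive measure
  have hdisj : Pairwise (Function.onFun Disjoint fun α : T => A n (α : I)) := by
    intro a b hab
    simp only [Function.onFun]
    rw [Set.disjoint_left]
    rintro β ⟨h1, h2⟩ ⟨h3, h4⟩
    have : (⟨(a : I), h1⟩ : {α : I | e α < e β}) = ⟨(b : I), h3⟩ :=
      hf β (h2.trans h4.symm)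
    exact hab (Subtype.ext (Subtype.mk_eq_mk.mp this))
  have hcnt : Set.Countable {α : T | 0 < ν (A n (α : I))} :=
    MeasureTheory.Measure.countable_meas_pos_of_disjoint_iUnion
      (fun α : T => htop (A n (α : I))) hdisj
  have hall : {α : T | 0 < ν (A n (α : I))} = Set.univ := by
    ext α
    simp only [Set.mem_setOf_eq, Set.mem_univ, iff_true]
    have hgα : g (α : I) = n := α.2
    have := hg (α : I)
    rw [hgα] at this
    exact pos_iff_ne_zero.mpr this
  rw [hall] at hcnt
  have : Countable T := Set.countable_univ_iff.mp hcnt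
  exact hT (Set.countable_coe_iff.mp this)

/-- Assuming the continuum hypothesis, every probability measure on the power set of a set
of cardinality continuum is a countable weighted sum of Dirac measures: there is a countable
set `S` carrying the full mass and `μ(A) = Σ_{ω ∈ S ∩ A} μ({ω})` for every `A`. -/
theorem probabilityMeasure_discrete_of_CH
    (hCH : Cardinal.aleph 1 = Cardinal.continuum)
    {I : Type*} [MeasurableSpace I] (htop : ∀ A : Set I, MeasurableSet A)
    (hI : Cardinal.mk I = Cardinal.continuum)
    (μ : Measure I) (hμ : IsProbabilityMeasure μ) :
    ∃ S : Set I, S.Countable ∧ μ Sᶜ = 0 ∧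
      ∀ A : Set I, μ A = ∑' ω : (S ∩ A : Set I), μ {ω.1} := by
  classical
  set S : Set I := {ω : I | μ {ω} ≠ 0} with hSdef
  have hScount : S.Countable := by
    have h := MeasureTheory.Measure.countable_meas_pos_of_disjoint_iUnion
      (μ := μ) (As := fun ω : I => ({ω} : Set I)) (fun ω => htop {ω})
      (fun a b hab => Set.disjoint_singleton.mpr hab)
    have : S = {ω : I | 0 < μ {ω}} := by
      ext ω; simp [hSdef, pos_iff_ne_zero]
    rw [this]
    exact h
  -- the restriction of μ to Sᶜ vanishes on singletons
  have hsing : ∀ ω : I, μ.restrict Sᶜ {ω} = 0 := by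
    intro ω
    rw [Measure.restrict_apply (htop _)]
    by_cases h : ω ∈ S
    · have : ({ω} : Set I) ∩ Sᶜ = ∅ := by
        ext x; simp only [Set.mem_inter_iff, Set.mem_singleton_iff, Set.mem_compl_iff,
          Set.mem_empty_iff_false, iff_false]
        rintro ⟨rfl, hx⟩; exact hx h
      rw [this, measure_empty]
    · have hω : μ {ω} = 0 := by simpa [hSdef] using h
      exact le_antisymm ((measure_mono Set.inter_subset_left).trans hω.le) zero_le
  have hnullSc : μ Sᶜ = 0 := by
    have h0 := ulam_aux htop (hI.trans (CH_transfer hCH).symm) (μ.restrict Sᶜ) hsing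
    rwa [Measure.restrict_apply_univ] at h0
  refine ⟨S, hScount, hnullSc, fun A => ?_⟩
  have h1 : μ A = μ (S ∩ A) := by
    apply le_antisymm
    · have hsub : A ⊆ (S ∩ A) ∪ Sᶜ := by
        intro x hx
        by_cases hxS : x ∈ S
        · exact Or.inl ⟨hxS, hx⟩
        · exact Or.inr hxS
      calc μ A ≤ μ ((S ∩ A) ∪ Sᶜ) := measure_mono hsub
        _ ≤ μ (S ∩ A) + μ Sᶜ := measure_union_le _ _
        _ = μ (S ∩ A) := by rw [hnullSc, add_zero]
    · exact measure_mono Set.inter_subset_right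
  rw [h1]
  have h2 : μ (⋃ ω ∈ S ∩ A, ({ω} : Set I)) = ∑' ω : (S ∩ A : Set I), μ {ω.1} :=
    measure_biUnion (hScount.mono Set.inter_subset_left)
      (fun a _ b _ hab => Set.disjoint_singleton.mpr hab)
      (fun b _ => htop {b})
  rw [← h2, Set.biUnion_of_singleton]
end

section
/- Let 𝒜 ⊆ ℒ^∞ be convex and closed in the weak topology τ. Then 𝒜 is 𝒫-sensitive. -/
open MeasureTheory Filter Topology Set

private lemma totalVariation_null_aux {Ω : Type*} [MeasurableSpace Ω] (μ : SignedMeasure Ω)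
    (A : Set Ω) (hA : MeasurableSet A)
    (h : ∀ B : Set Ω, MeasurableSet B → B ⊆ A → μ B = 0) : μ.totalVariation A = 0 := by
  obtain ⟨i, hi₁, hi₂, hi₃, hpos, hneg⟩ := μ.toJordanDecomposition_spec
  rw [SignedMeasure.totalVariation, Measure.add_apply, hpos, hneg,
    SignedMeasure.toMeasureOfZeroLE_apply _ _ _ hA, SignedMeasure.toMeasureOfLEZero_apply _ _ _ hA]
  simp [h (i ∩ A) (hi₁.inter hA) inter_subset_right,
    h (iᶜ ∩ A) (hi₁.compl.inter hA) inter_subset_right]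

/-- Every convex subset of `ℒ^∞` that is closed in the weak topology `τ = σ(ℒ^∞, ca_c)`
is `Pr`-sensitive. -/
theorem pSensitive_of_weaklyClosed
    {Ω : Type*} [MeasurableSpace Ω] (Pr : Set (Measure Ω))
    (hne : Pr.Nonempty) (hprob : ∀ P ∈ Pr, IsProbabilityMeasure P)
    (𝒜 : Set (boundedMeasurable Ω)) (hconv : Convex ℝ 𝒜)
    (hclosed : @IsClosed _ (tauTop Ω Pr) 𝒜) :
    PSensitive Pr 𝒜 := by
  classical
  obtain ⟨P₀, hP₀⟩ := hne
  haveI : IsProbabilityMeasure P₀ := hprob P₀ hP₀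
  haveI htvfin : ∀ μ : SignedMeasure Ω, IsFiniteMeasure μ.totalVariation := fun μ =>
    inferInstanceAs (IsFiniteMeasure (μ.toJordanDecomposition.posPart +
      μ.toJordanDecomposition.negPart))
  refine ⟨{Q | IsProbabilityMeasure Q ∧ mDomC Pr Q}, fun Q hQ => hQ, ?_⟩
  intro X hX
  letI : TopologicalSpace (boundedMeasurable Ω) := tauTop Ω Pr
  rw [← hclosed.closure_eq, mem_closure_iff_nhds]
  intro t ht
  have hnhds : 𝓝 X = ⨅ μ : caC Ω Pr,
      Filter.comap (fun f : boundedMeasurable Ω => sInt μ.1 f.1) (𝓝 (sInt μ.1 X.1)) := by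
    show @nhds _ (tauTop Ω Pr) X = _
    rw [tauTop, _root_.nhds_iInf]
    exact iInf_congr fun μ => nhds_induced _ _
  rw [hnhds, Filter.mem_iInf] at ht
  obtain ⟨I, hIfin, V, hV, rfl⟩ := ht
  -- build a dominating probability measure
  set s : Finset (caC Ω Pr) := hIfin.toFinset with hs
  set ν : Measure Ω := P₀ + ∑ μ ∈ s, μ.1.totalVariation with hν
  have happ : ∀ A : Set Ω, MeasurableSet A →
      ν A = P₀ A + ∑ μ ∈ s, μ.1.totalVariation A := by
    intro A hA
    rw [hν, Measure.add_apply, Measure.finset_sum_apply]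
  have hνtop : ν univ ≠ ⊤ := by
    rw [happ univ MeasurableSet.univ]
    exact ENNReal.add_ne_top.2 ⟨measure_ne_top _ _,
      (ENNReal.sum_lt_top.2 fun μ _ => measure_lt_top _ _).ne⟩
  have hν0 : ν univ ≠ 0 := by
    intro h
    have h1 : P₀ univ ≤ ν univ := Measure.le_iff'.1 (Measure.le_add_right le_rfl) univ
    rw [h, measure_univ] at h1
    simp at h1
  set Q : Measure Ω := (ν univ)⁻¹ • ν with hQ
  have hQprob : IsProbabilityMeasure Q :=
    ⟨by rw [hQ, Measure.smul_apply, smul_eq_mul, ENNReal.inv_mul_cancel hν0 hνtop]⟩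
  have hνQ : ν ≪ Q := by
    intro A hA
    rw [hQ, Measure.smul_apply, smul_eq_mul, mul_eq_zero] at hA
    rcases hA with h | h
    · exact absurd h (ENNReal.inv_ne_zero.2 hνtop)
    · exact h
  have htvQ : ∀ μ ∈ s, (μ : caC Ω Pr).1.totalVariation ≪ Q := by
    intro μ hμ
    refine (Measure.AbsolutelyContinuous.mk fun A hA h0 => ?_).trans hνQ
    rw [happ A hA] at h0
    rcases add_eq_zero.1 h0 with ⟨-, h2⟩
    exact (Finset.sum_eq_zero_iff.1 h2) μ hμ
  have hQdom : mDomC Pr Q := by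
    intro A hA h0
    have : ν A = 0 := by
      rw [happ A hA, h0 P₀ hP₀, Finset.sum_eq_zero, add_zero]
      intro μ _
      refine totalVariation_null_aux μ.1 A hA fun B hB hsub => ?_
      exact μ.2 B hB fun P hP => measure_mono_null hsub (h0 P hP)
    rw [hQ, Measure.smul_apply, this, smul_eq_mul, mul_zero]
  obtain ⟨Y, hY𝒜, hXY⟩ := hX Q ⟨hQprob, hQdom⟩
  refine ⟨Y, ?_, hY𝒜⟩
  rw [Set.mem_iInter]
  intro i
  have hiI : (i : caC Ω Pr) ∈ s := hIfin.mem_toFinset.2 i.2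
  have hac : (i : caC Ω Pr).1.totalVariation ≪ Q := htvQ i hiI
  have hsInt : sInt (i : caC Ω Pr).1 Y.1 = sInt (i : caC Ω Pr).1 X.1 := by
    set m := (i : caC Ω Pr).1
    have hpostv : m.toJordanDecomposition.posPart ≤ m.totalVariation :=
      Measure.le_add_right le_rfl
    have hnegtv : m.toJordanDecomposition.negPart ≤ m.totalVariation :=
      Measure.le_add_left le_rfl
    have hpe : X.1 =ᵐ[m.toJordanDecomposition.posPart] Y.1 :=
      hXY.filter_mono ((Measure.absolutelyContinuous_of_le hpostv).trans hac).ae_le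
    have hne : X.1 =ᵐ[m.toJordanDecomposition.negPart] Y.1 :=
      hXY.filter_mono ((Measure.absolutelyContinuous_of_le hnegtv).trans hac).ae_le
    rw [sInt, sInt, integral_congr_ae hpe.symm, integral_congr_ae hne.symm]
  obtain ⟨W, hW, hsub⟩ := Filter.mem_comap.1 (hV i)
  apply hsub
  show sInt (i : caC Ω Pr).1 Y.1 ∈ W
  rw [hsInt]
  exact mem_of_mem_nhds hW
end
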